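/- arXiv:2410.10668 — 5 statements merged into one kernel-verified Lean document; each statement's English description precedes it below -/
import Mathlib

section
/- Let f : 𝕋 → ℝ be continuous on the circle 𝕋 = ℝ/ℤ with 0 ≤ f ≤ 1, and let φ ∈ Φ. For each y ∈ [0,1) let (l_{y,k})_k be the lengths of the component arcs of the superlevel set E_y = {x : f(x) > y}. If ∫_0^1 (Σ_k l_{y,k} φ(l_{y,k})) dy < ∞, then there exists a constant C > 0 such that ω(f,t)_1 ≤ C/φ(t) for all t ∈ (0,1]. -/
open MeasureTheory Set

/-- The `L^p` modulus of continuity `ω(f,t)_p` on the circle `𝕋 = ℝ/ℤ`. -/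
noncomputable def modulus (f : AddCircle (1:ℝ) → ℝ) (p t : ℝ) : ℝ :=
  ⨆ h : {h : ℝ // |h| ≤ t},
    (∫ x : AddCircle (1:ℝ), |f (x + ((h.1 : ℝ) : AddCircle (1:ℝ))) - f x| ^ p) ^ (1/p)

/-- `τ(h,E)`: the measure of the set where the characteristic function of `E`
translated by `h` differs from itself. -/
noncomputable def tau (h : ℝ) (E : Set (AddCircle (1:ℝ))) : ℝ :=
  (volume {x : AddCircle (1:ℝ) |
    E.indicator (fun _ => (1:ℝ)) (x + ((h : ℝ) : AddCircle (1:ℝ)))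
      ≠ E.indicator (fun _ => (1:ℝ)) x}).toReal

/-- The open arc of the circle which is the image of the interval `(a, a+l)`. -/
noncomputable def arc (a l : ℝ) : Set (AddCircle (1:ℝ)) :=
  (fun r : ℝ => (r : AddCircle (1:ℝ))) '' Set.Ioo a (a + l)

/-- The class `Φ`: `φ` is positive and non-increasing on `(0,1]`, and `t ↦ t·φ(t)` is
non-decreasing, concave and bounded on some interval `(0,1/c)` with `c > 1`. -/
def IsPhiClass (φ : ℝ → ℝ) : Prop :=
  (∀ t ∈ Set.Ioc (0:ℝ) 1, 0 < φ t) ∧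
  AntitoneOn φ (Set.Ioc 0 1) ∧
  ∃ c > (1:ℝ), MonotoneOn (fun t => t * φ t) (Set.Ioo 0 (1/c)) ∧
    ConcaveOn ℝ (Set.Ioo 0 (1/c)) (fun t => t * φ t) ∧
    BddAbove ((fun t => t * φ t) '' Set.Ioo 0 (1/c))

open scoped symmDiff ENNReal

/-!
Since `0 ≤ f ≤ 1`, Tonelli applied to the region between the graphs of `f` and `f(· + h)` gives
the layer-cake identity `∫ |f(x+h) - f(x)| dx = ∫₀¹ |(E_y - h) ∆ E_y| dy`. Translating an arc
of length `l` by `h` moves a set of measure at most `2 min(|h|, l)`, so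
`|(E_y - h) ∆ E_y| ≤ ∑_k 2 min(|h|, l_{y,k})`. For `φ ∈ Φ` the function `s ↦ s φ(s)` is
increasing up to a constant factor on `(0,1]`, and `φ` is non-increasing, hence
`min(|h|, l) φ(t) ≤ A l φ(l)` whenever `|h| ≤ t`. Integrating over `y` yields
`ω(f,t)_1 ≤ 2 A M / φ(t)`, where `M` is the finite integral in the hypothesis.
-/

namespace AddCircle

variable {T : ℝ} [Fact (0 < T)]

theorem volume_image_coe_of_subset_Ioc {S : Set ℝ} {t : ℝ} (hS : S ⊆ Ioc t (t + T)) :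
    volume (((↑) : ℝ → AddCircle T) '' S) = volume S := by
  have hmp :
      MeasurePreserving (measurableEquivIoc T t) volume (Measure.comap Subtype.val volume) :=
    measurePreserving_equivIoc T
  have himage : ((↑) : ℝ → AddCircle T) '' S
      = measurableEquivIoc T t ⁻¹' (Subtype.val ⁻¹' S) := by
    ext x
    constructor
    · rintro ⟨r, hr, rfl⟩
      show (equivIoc T t r : ℝ) ∈ S
      rwa [equivIoc_coe_eq (hS hr)]
    · intro hx
      exact ⟨_, hx, coe_equivIoc⟩
  rw [himage, hmp.measure_preimage_equiv,
    (MeasurableEmbedding.subtype_coe measurableSet_Ioc).comap_apply,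
    Subtype.image_preimage_coe, inter_eq_right.mpr hS]

end AddCircle

theorem volume_Ioo_diff_Ioo_le (u v m : ℝ) :
    volume (Ioo u (u + m) \ Ioo v (v + m)) ≤ ENNReal.ofReal |u - v| := by
  have hsub : Ioo u (u + m) \ Ioo v (v + m) ⊆ Ioc u v ∪ Ico (v + m) (u + m) := by
    rintro r ⟨⟨hur, hru⟩, hr⟩
    rcases le_or_gt r v with hrv | hvr
    · exact Or.inl ⟨hur, hrv⟩
    · exact Or.inr ⟨not_lt.mp fun h => hr ⟨hvr, h⟩, hru⟩
  calc volume (Ioo u (u + m) \ Ioo v (v + m))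
      ≤ volume (Ioc u v) + volume (Ico (v + m) (u + m)) :=
        (measure_mono hsub).trans (measure_union_le _ _)
    _ = ENNReal.ofReal |u - v| := by
      rw [Real.volume_Ioc, Real.volume_Ico, add_sub_add_right_eq_sub]
      rcases le_total u v with h | h
      · simp [abs_of_nonpos (sub_nonpos.mpr h), ENNReal.ofReal_of_nonpos (sub_nonpos.mpr h)]
      · simp [abs_of_nonneg (sub_nonneg.mpr h), ENNReal.ofReal_of_nonpos (sub_nonpos.mpr h)]

theorem volume_arc_diff_arc_le (u v : ℝ) {m : ℝ} (hm : m ≤ 1) :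
    volume (arc u m \ arc v m) ≤ ENNReal.ofReal (min |u - v| m) := by
  have hsub : Ioo u (u + m) \ Ioo v (v + m) ⊆ Ioc u (u + 1) := fun r hr =>
    ⟨hr.1.1, by linarith [hr.1.2]⟩
  have hdiff : arc u m \ arc v m
      ⊆ ((↑) : ℝ → AddCircle (1:ℝ)) '' (Ioo u (u + m) \ Ioo v (v + m)) := by
    rintro _ ⟨⟨r, hr, rfl⟩, hx⟩
    exact ⟨r, ⟨hr, fun hr' => hx ⟨r, hr', rfl⟩⟩, rfl⟩
  refine (measure_mono hdiff).trans ?_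
  rw [AddCircle.volume_image_coe_of_subset_Ioc hsub, ENNReal.ofReal_min]
  refine le_min (volume_Ioo_diff_Ioo_le u v m) ?_
  calc volume (Ioo u (u + m) \ Ioo v (v + m)) ≤ volume (Ioo u (u + m)) :=
        measure_mono sdiff_subset
    _ = ENNReal.ofReal m := by rw [Real.volume_Ioo, add_sub_cancel_left]

theorem preimage_add_arc (h b m : ℝ) :
    (· + (h : AddCircle (1:ℝ))) ⁻¹' arc b m = arc (b - h) m := by
  ext x
  simp only [arc, mem_preimage, mem_image, mem_Ioo]
  constructor
  · rintro ⟨r, hr, hrx⟩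
    refine ⟨r - h, ⟨by linarith [hr.1], by linarith [hr.2]⟩, ?_⟩
    rw [AddCircle.coe_sub, hrx, add_sub_cancel_right]
  · rintro ⟨r, hr, rfl⟩
    exact ⟨r + h, ⟨by linarith [hr.1], by linarith [hr.2]⟩, AddCircle.coe_add 1 r h⟩

theorem volume_preimage_add_arc_symmDiff_le (h a : ℝ) {m : ℝ} (hm : m ≤ 1) :
    volume (((· + (h : AddCircle (1:ℝ))) ⁻¹' arc a m) ∆ arc a m)
      ≤ 2 * ENNReal.ofReal (min |h| m) := by
  have h₁ := volume_arc_diff_arc_le (a - h) a hm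
  have h₂ := volume_arc_diff_arc_le a (a - h) hm
  rw [sub_sub_cancel_left, abs_neg] at h₁
  rw [sub_sub_cancel] at h₂
  rw [preimage_add_arc, Set.symmDiff_def, two_mul]
  exact (measure_union_le _ _).trans (add_le_add h₁ h₂)

theorem measure_preimage_biUnion_symmDiff_le {X ι : Type*} [MeasurableSpace X] (μ : Measure X)
    (g : X → X) {K : Set ι} [Countable K] (A : ι → Set X) :
    μ ((g ⁻¹' ⋃ k ∈ K, A k) ∆ ⋃ k ∈ K, A k) ≤ ∑' k : K, μ ((g ⁻¹' A k) ∆ A k) := by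
  rw [preimage_iUnion₂, biUnion_eq_iUnion, biUnion_eq_iUnion]
  exact (measure_mono iUnion_symmDiff_iUnion_subset).trans (measure_iUnion_le _)

theorem Iio_symmDiff_Iio {α : Type*} [LinearOrder α] (a b : α) :
    Iio a ∆ Iio b = Ico (min a b) (max a b) := by
  ext y
  simp only [Set.mem_symmDiff, mem_Iio, mem_Ico, min_le_iff, lt_max_iff]
  rcases le_total a b with h | h <;> constructor <;> intro hy <;> grind

theorem volume_restrict_Ioo_Iio_symmDiff_Iio {a b : ℝ} (ha : a ∈ Icc (0:ℝ) 1)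
    (hb : b ∈ Icc (0:ℝ) 1) :
    volume.restrict (Ioo 0 1) (Iio a ∆ Iio b) = ENNReal.ofReal |a - b| := by
  have hsub : Ico (min a b) (max a b) ⊆ Icc 0 1 := fun y hy =>
    ⟨(le_min ha.1 hb.1).trans hy.1, hy.2.le.trans (max_le ha.2 hb.2)⟩
  rw [Measure.restrict_congr_set Ioo_ae_eq_Icc, Iio_symmDiff_Iio,
    Measure.restrict_apply measurableSet_Ico, inter_eq_left.mpr hsub, Real.volume_Ico,
    max_sub_min_eq_abs, abs_sub_comm]

theorem lintegral_ofReal_abs_sub_eq {X : Type*} [MeasurableSpace X] (μ : Measure X) [SFinite μ]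
    {g₁ g₂ : X → ℝ} (hg₁ : Measurable g₁) (hg₂ : Measurable g₂)
    (h₁ : ∀ x, g₁ x ∈ Icc (0:ℝ) 1) (h₂ : ∀ x, g₂ x ∈ Icc (0:ℝ) 1) :
    ∫⁻ x, ENNReal.ofReal |g₁ x - g₂ x| ∂μ
      = ∫⁻ y in Ioo 0 1, μ ({x | y < g₁ x} ∆ {x | y < g₂ x}) := by
  set S : Set (X × ℝ) := {p | p.2 < g₁ p.1} ∆ {p | p.2 < g₂ p.1}
  have hS : MeasurableSet S :=
    (measurableSet_lt measurable_snd (hg₁.comp measurable_fst)).symmDiff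
      (measurableSet_lt measurable_snd (hg₂.comp measurable_fst))
  calc ∫⁻ x, ENNReal.ofReal |g₁ x - g₂ x| ∂μ
      = ∫⁻ x, volume.restrict (Ioo 0 1) (Prod.mk x ⁻¹' S) ∂μ := by
        congr with x
        exact (volume_restrict_Ioo_Iio_symmDiff_Iio (h₁ x) (h₂ x)).symm
    _ = ∫⁻ y in Ioo 0 1, μ ((·, y) ⁻¹' S) := by
        rw [← Measure.prod_apply hS, Measure.prod_apply_symm hS]
    _ = ∫⁻ y in Ioo 0 1, μ ({x | y < g₁ x} ∆ {x | y < g₂ x}) := rfl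

theorem modulus_one_le {f : AddCircle (1:ℝ) → ℝ} {t B : ℝ} (ht : 0 ≤ t)
    (hB : ∀ h : ℝ, |h| ≤ t → ∫ x, |f (x + h) - f x| ≤ B) : modulus f 1 t ≤ B := by
  have : Nonempty {h : ℝ // |h| ≤ t} := ⟨⟨0, by simpa using ht⟩⟩
  simp only [modulus, Real.rpow_one, div_one]
  exact ciSup_le fun h => hB h.1 h.2

namespace IsPhiClass

variable {φ : ℝ → ℝ}

theorem exists_mul_le_mul (hφ : IsPhiClass φ) :
    ∃ A ≥ (1:ℝ), ∀ s u, 0 < s → s ≤ u → u ≤ 1 → s * φ s ≤ A * (u * φ u) := by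
  obtain ⟨hpos, hanti, c, hc, hmono, -, B, hB⟩ := hφ
  have hc0 : 0 < 1 / c := by positivity
  have hc1 : 1 / c ≤ 1 := (div_le_one (by linarith)).mpr hc.le
  have hbound : ∀ s ∈ Ioc (0:ℝ) 1, s * φ s ≤ max B (φ (1 / c)) := by
    intro s hs
    rcases lt_or_ge s (1 / c) with h | h
    · exact (hB ⟨s, ⟨hs.1, h⟩, rfl⟩).trans (le_max_left _ _)
    · calc s * φ s ≤ 1 * φ (1 / c) :=
            mul_le_mul hs.2 (hanti ⟨hc0, hc1⟩ hs h) (hpos s hs).le zero_le_one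
        _ ≤ max B (φ (1 / c)) := by rw [one_mul]; exact le_max_right _ _
  set β := 1 / c * φ 1
  have hβ : 0 < β := mul_pos hc0 (hpos 1 ⟨one_pos, le_rfl⟩)
  refine ⟨max 1 (max B (φ (1 / c)) / β), le_max_left _ _, fun s u hs hsu hu => ?_⟩
  have hu0 : 0 < u := hs.trans_le hsu
  have huφ : 0 ≤ u * φ u := mul_nonneg hu0.le (hpos u ⟨hu0, hu⟩).le
  rcases lt_or_ge u (1 / c) with h | h
  · calc s * φ s ≤ u * φ u := hmono ⟨hs, hsu.trans_lt h⟩ ⟨hu0, h⟩ hsu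
      _ ≤ _ := le_mul_of_one_le_left huφ (le_max_left _ _)
  · have hβu : β ≤ u * φ u :=
      mul_le_mul h (hanti ⟨hu0, hu⟩ ⟨one_pos, le_rfl⟩ hu) (hpos 1 ⟨one_pos, le_rfl⟩).le hu0.le
    calc s * φ s ≤ max B (φ (1 / c)) := hbound s ⟨hs, hsu.trans hu⟩
      _ = max B (φ (1 / c)) / β * β := (div_mul_cancel₀ _ hβ.ne').symm
      _ ≤ max 1 (max B (φ (1 / c)) / β) * (u * φ u) :=
        mul_le_mul (le_max_right _ _) hβu hβ.le (zero_le_one.trans (le_max_left _ _))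

theorem exists_min_mul_le (hφ : IsPhiClass φ) :
    ∃ A > (0:ℝ), ∀ t ∈ Ioc (0:ℝ) 1, ∀ s ∈ Icc 0 t, ∀ m ∈ Ioc (0:ℝ) 1,
      min s m * φ t ≤ A * (m * φ m) := by
  obtain ⟨A, hA, hAφ⟩ := hφ.exists_mul_le_mul
  refine ⟨A, by linarith, fun t ht s hs m hm => ?_⟩
  have hmφ : 0 ≤ m * φ m := mul_nonneg hm.1.le (hφ.1 m hm).le
  rcases le_total m s with hms | hsm
  · calc min s m * φ t = m * φ t := by rw [min_eq_right hms]
      _ ≤ m * φ m := mul_le_mul_of_nonneg_left (hφ.2.1 hm ht (hms.trans hs.2)) hm.1.le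
      _ ≤ A * (m * φ m) := le_mul_of_one_le_left hmφ hA
  · rw [min_eq_left hsm]
    rcases hs.1.eq_or_lt with rfl | hs0
    · rw [zero_mul]; exact mul_nonneg (by linarith) hmφ
    · calc s * φ t ≤ s * φ s :=
            mul_le_mul_of_nonneg_left (hφ.2.1 ⟨hs0, hs.2.trans ht.2⟩ ht hs.2) hs0.le
        _ ≤ A * (m * φ m) := hAφ s m hs0 hsm hm.2

end IsPhiClass

theorem volume_preimage_add_symmDiff_le_of_eq_biUnion_arc {E : Set (AddCircle (1:ℝ))}
    {K : Set ℕ} {a l : ℕ → ℝ} (hE : E = ⋃ k ∈ K, arc (a k) (l k)) (hl : ∀ k ∈ K, l k ≤ 1)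
    {h B : ℝ} {w : ℕ → ℝ} (hB : 0 ≤ B) (hw : ∀ k ∈ K, 2 * min |h| (l k) ≤ B * w k) :
    volume (((· + (h : AddCircle (1:ℝ))) ⁻¹' E) ∆ E)
      ≤ ENNReal.ofReal B * ∑' k : K, ENNReal.ofReal (w k) := by
  rw [hE, ← ENNReal.tsum_mul_left]
  refine (measure_preimage_biUnion_symmDiff_le _ _ _).trans (ENNReal.tsum_le_tsum fun k => ?_)
  rw [← ENNReal.ofReal_mul hB]
  calc volume (((· + (h : AddCircle (1:ℝ))) ⁻¹' arc (a k) (l k)) ∆ arc (a k) (l k))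
      ≤ 2 * ENNReal.ofReal (min |h| (l k)) :=
        volume_preimage_add_arc_symmDiff_le h (a k) (hl k k.2)
    _ = ENNReal.ofReal (2 * min |h| (l k)) := by
        rw [ENNReal.ofReal_mul zero_le_two, ENNReal.ofReal_ofNat]
    _ ≤ ENNReal.ofReal (B * w k) := ENNReal.ofReal_le_ofReal (hw k k.2)

theorem stmt_0_general (f : AddCircle (1:ℝ) → ℝ) (hf : Continuous f)
    (hf0 : ∀ x, 0 ≤ f x) (hf1 : ∀ x, f x ≤ 1)
    (φ : ℝ → ℝ) (hφ : IsPhiClass φ)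
    (a l : ℝ → ℕ → ℝ) (K : ℝ → Set ℕ)
    (hdecomp : ∀ y ∈ Set.Ico (0:ℝ) 1,
      {x : AddCircle (1:ℝ) | f x > y} = ⋃ k ∈ K y, arc (a y k) (l y k))
    (hlen : ∀ y ∈ Set.Ico (0:ℝ) 1, ∀ k ∈ K y, l y k ∈ Set.Ioc (0:ℝ) 1)
    (hint : ∫⁻ y in Set.Ioo (0:ℝ) 1,
      ∑' k : K y, ENNReal.ofReal (l y k * φ (l y k)) < ⊤) :
    ∃ C > 0, ∀ t ∈ Set.Ioc (0:ℝ) 1, modulus f 1 t ≤ C / φ t := by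
  obtain ⟨A, hA, hAφ⟩ := hφ.exists_min_mul_le
  set M := (∫⁻ y in Ioo (0:ℝ) 1, ∑' k : K y, ENNReal.ofReal (l y k * φ (l y k))).toReal
  refine ⟨2 * A * M + 1, by positivity, fun t ht => modulus_one_le ht.1.le fun h hh => ?_⟩
  have hφt : 0 < φ t := hφ.1 t ht
  have hlevel : ∀ y ∈ Ioo (0:ℝ) 1, volume ({x | y < f (x + h)} ∆ {x | y < f x})
      ≤ ENNReal.ofReal (2 * A / φ t) * ∑' k : K y, ENNReal.ofReal (l y k * φ (l y k)) := by
    intro y hy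
    have hy' : y ∈ Ico (0:ℝ) 1 := Ioo_subset_Ico_self hy
    refine volume_preimage_add_symmDiff_le_of_eq_biUnion_arc (h := h) (B := 2 * A / φ t)
      (w := fun k => l y k * φ (l y k)) (hdecomp y hy')
      (fun k hk => (hlen y hy' k hk).2) (by positivity) fun k hk => ?_
    rw [div_mul_eq_mul_div, le_div_iff₀ hφt, mul_assoc, mul_assoc]
    exact mul_le_mul_of_nonneg_left (hAφ t ht |h| ⟨abs_nonneg h, hh⟩ _ (hlen y hy' k hk))
      zero_le_two
  have hmeas : Measurable fun x : AddCircle (1:ℝ) => f (x + h) := by fun_prop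
  calc ∫ x, |f (x + h) - f x|
      = (∫⁻ y in Ioo 0 1, volume ({x | y < f (x + h)} ∆ {x | y < f x})).toReal := by
        rw [integral_eq_lintegral_of_nonneg_ae (.of_forall fun _ => abs_nonneg _)
          (by fun_prop : Continuous fun x => |f (x + h) - f x|).aestronglyMeasurable,
          lintegral_ofReal_abs_sub_eq _ hmeas hf.measurable (fun _ => ⟨hf0 _, hf1 _⟩)
            (fun _ => ⟨hf0 _, hf1 _⟩)]
    _ ≤ (ENNReal.ofReal (2 * A / φ t)
          * ∫⁻ y in Ioo 0 1, ∑' k : K y, ENNReal.ofReal (l y k * φ (l y k))).toReal :=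
        ENNReal.toReal_mono (ENNReal.mul_ne_top ENNReal.ofReal_ne_top hint.ne)
          ((setLIntegral_mono' measurableSet_Ioo hlevel).trans_eq
            (lintegral_const_mul' _ _ ENNReal.ofReal_ne_top))
    _ = 2 * A * M / φ t := by
        rw [ENNReal.toReal_mul, ENNReal.toReal_ofReal (by positivity)]; ring
    _ ≤ (2 * A * M + 1) / φ t := by gcongr; linarith

/-- If `f` is continuous on the circle with `0 ≤ f ≤ 1`, `φ ∈ Φ`, and the
superlevel sets `E_y = {x : f x > y}` decompose into disjoint arcs of lengths `l_{y,k}` with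
`∫₀¹ ∑_k l_{y,k} φ(l_{y,k}) dy < ∞`, then `ω(f,t)_1 ≤ C/φ(t)` on `(0,1]` for some `C > 0`. -/
theorem stmt_0 (f : AddCircle (1:ℝ) → ℝ) (hf : Continuous f)
    (hf0 : ∀ x, 0 ≤ f x) (hf1 : ∀ x, f x ≤ 1)
    (φ : ℝ → ℝ) (hφ : IsPhiClass φ)
    (a l : ℝ → ℕ → ℝ) (K : ℝ → Set ℕ)
    (hdecomp : ∀ y ∈ Set.Ico (0:ℝ) 1,
      {x : AddCircle (1:ℝ) | f x > y} = ⋃ k ∈ K y, arc (a y k) (l y k))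
    (hdisj : ∀ y ∈ Set.Ico (0:ℝ) 1,
      (K y).PairwiseDisjoint (fun k => arc (a y k) (l y k)))
    (hlen : ∀ y ∈ Set.Ico (0:ℝ) 1, ∀ k ∈ K y, l y k ∈ Set.Ioc (0:ℝ) 1)
    (hint : ∫⁻ y in Set.Ioo (0:ℝ) 1,
      ∑' k : K y, ENNReal.ofReal (l y k * φ (l y k)) < ⊤) :
    ∃ C > 0, ∀ t ∈ Set.Ioc (0:ℝ) 1, modulus f 1 t ≤ C / φ t :=
  stmt_0_general f hf hf0 hf1 φ hφ a l K hdecomp hlen hint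
end

section
/- Let f : 𝕋 → ℝ be continuous on the circle 𝕋 = ℝ/ℤ with 0 ≤ f ≤ 1, and let n(y) denote the number (possibly infinite) of solutions x ∈ 𝕋 of f(x) = y. If ∫_0^1 log(n(y)) dy < ∞ (the integrand interpreted as 0 when n(y) ≤ 1 and +∞ when n(y) = ∞), then ω(f,t)_1 = O(1/log(1/t)) as t → 0+, i.e. there exist C > 0 and t₀ ∈ (0,1) such that ω(f,t)_1 ≤ C/log(1/t) for all t ∈ (0,t₀]. -/
open MeasureTheory Set Classical

lemma aux_norm (x : ℝ) : ‖(x : AddCircle (1:ℝ))‖ ≤ |x| := by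
  rw [AddCircle.norm_eq]
  simpa using round_le x 0

lemma aux_layer {a b : ℝ} (ha0 : 0 ≤ a) (ha1 : a ≤ 1) (hb0 : 0 ≤ b) (hb1 : b ≤ 1) :
    ∫⁻ y in Set.Ioo (0:ℝ) 1, (if ((y < a) ≠ (y < b)) then (1:ENNReal) else 0)
      = ENNReal.ofReal |a - b| := by
  have key : ∀ {a b : ℝ}, 0 ≤ a → a ≤ b → b ≤ 1 →
      ∫⁻ y in Set.Ioo (0:ℝ) 1, (if ((y < a) ≠ (y < b)) then (1:ENNReal) else 0)
        = ENNReal.ofReal (b - a) := by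
    intro a b ha hab hb1
    have hset : ∀ y : ℝ, (if ((y < a) ≠ (y < b)) then (1:ENNReal) else 0)
        = (Set.Ico a b).indicator (fun _ => (1:ENNReal)) y := by
      intro y
      by_cases h1 : y < a
      · simp [h1, h1.trans_le hab, Set.indicator_of_notMem, not_le.2 h1,
          Set.mem_Ico, not_lt.2 h1.le]
      · by_cases h2 : y < b
        · simp [h1, h2, Set.mem_Ico, not_lt.1 h1]
        · simp [h1, h2, Set.mem_Ico]
    simp_rw [hset]
    rw [lintegral_indicator measurableSet_Ico]
    simp only [lintegral_const, Measure.restrict_restrict measurableSet_Ico,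
      Measure.restrict_apply MeasurableSet.univ, Set.univ_inter, one_mul]
    have hle : volume (Ico a b ∩ Ioo 0 1) ≤ ENNReal.ofReal (b - a) := by
      refine le_trans (measure_mono Set.inter_subset_left) ?_
      simp [Real.volume_Ico]
    have hge : ENNReal.ofReal (b - a) ≤ volume (Ico a b ∩ Ioo 0 1) := by
      have : Ioo a b ⊆ Ico a b ∩ Ioo 0 1 := by
        intro y hy
        exact ⟨⟨hy.1.le, hy.2⟩, ha.trans_lt hy.1, hy.2.trans_le hb1⟩
      calc ENNReal.ofReal (b - a) = volume (Ioo a b) := (Real.volume_Ioo).symm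
        _ ≤ _ := measure_mono this
    exact le_antisymm hle hge
  rcases le_total a b with hab | hab
  · rw [abs_sub_comm, abs_of_nonneg (sub_nonneg.2 hab)]; exact key ha0 hab hb1
  · rw [abs_of_nonneg (sub_nonneg.2 hab)]
    have := key hb0 hab ha1
    simpa [ne_comm, show ∀ y:ℝ, ((y < b) ≠ (y < a)) ↔ ((y < a) ≠ (y < b)) from fun y => ne_comm] using this

lemma aux_slice (f : AddCircle (1:ℝ) → ℝ) (hf : Continuous f) (y h : ℝ) :
    {x : AddCircle (1:ℝ) | (y < f (x + ((h:ℝ) : AddCircle (1:ℝ)))) ≠ (y < f x)}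
      ⊆ ⋃ z ∈ {x : AddCircle (1:ℝ) | f x = y}, Metric.closedBall z |h| := by
  intro x hx
  set g : ℝ → ℝ := fun s => f (x + ((s * h : ℝ) : AddCircle (1:ℝ))) with hg
  have hgc : Continuous g := by
    apply hf.comp
    exact continuous_const.add ((AddCircle.continuous_mk' 1).comp (continuous_id.mul continuous_const))
  have hg0 : g 0 = f x := by simp [hg]
  have hg1 : g 1 = f (x + ((h:ℝ) : AddCircle (1:ℝ))) := by simp [hg]
  have hy : y ∈ Set.uIcc (g 0) (g 1) := by
    simp only [Set.mem_setOf_eq] at hx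
    rw [hg0, hg1]
    rcases Classical.em (y < f x) with h1 | h1
    · have h2 : ¬ (y < f (x + ((h:ℝ) : AddCircle (1:ℝ)))) := fun h2 => hx (by simp [h1, h2])
      exact Set.mem_uIcc.2 (Or.inr ⟨not_lt.1 h2, h1.le⟩)
    · have h2 : y < f (x + ((h:ℝ) : AddCircle (1:ℝ))) := by
        by_contra h2; exact hx (by simp [h1, h2])
      exact Set.mem_uIcc.2 (Or.inl ⟨not_lt.1 h1, h2.le⟩)
  obtain ⟨s, hs, hgs⟩ := intermediate_value_uIcc (hgc.continuousOn (s := Set.uIcc 0 1)) hy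
  have hs' : s ∈ Set.Icc (0:ℝ) 1 := by rwa [Set.uIcc_of_le zero_le_one] at hs
  refine Set.mem_biUnion (show x + ((s*h : ℝ) : AddCircle (1:ℝ)) ∈ {x : AddCircle (1:ℝ) | f x = y} from hgs) ?_
  rw [Metric.mem_closedBall, dist_eq_norm]
  have : x - (x + ((s*h : ℝ) : AddCircle (1:ℝ))) = -((s*h : ℝ) : AddCircle (1:ℝ)) := by abel
  rw [this, norm_neg]
  calc ‖((s*h : ℝ) : AddCircle (1:ℝ))‖ ≤ |s*h| := aux_norm _
    _ ≤ |h| := by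
        rw [abs_mul, abs_of_nonneg hs'.1]
        nlinarith [hs'.1, hs'.2, abs_nonneg h]

lemma aux_main (f : AddCircle (1:ℝ) → ℝ) (hf : Continuous f)
    (hf0 : ∀ x, 0 ≤ f x) (hf1 : ∀ x, f x ≤ 1) (h : ℝ) (N : ℕ) (hN : 2 ≤ N) :
    ∫⁻ x : AddCircle (1:ℝ), ENNReal.ofReal |f (x + ((h:ℝ) : AddCircle (1:ℝ))) - f x| ≤
      ENNReal.ofReal (2 * N * |h|) + (ENNReal.ofReal (Real.log N))⁻¹ *
        ∫⁻ y in Set.Ioo (0:ℝ) 1,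
          (if {x : AddCircle (1:ℝ) | f x = y}.Infinite then ⊤
           else ENNReal.ofReal (Real.log ({x : AddCircle (1:ℝ) | f x = y}.ncard))) := by
  set c : ENNReal := ENNReal.ofReal (Real.log N) with hc
  have hfh : Continuous (fun x : AddCircle (1:ℝ) => f (x + ((h:ℝ) : AddCircle (1:ℝ)))) :=
    hf.comp (continuous_id.add continuous_const)
  set F : AddCircle (1:ℝ) → ℝ → ENNReal := fun x y =>
    if ((y < f (x + ((h:ℝ) : AddCircle (1:ℝ)))) ≠ (y < f x)) then 1 else 0 with hF
  -- step 1: pointwise layer cake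
  have step1 : ∀ x, ENNReal.ofReal |f (x + ((h:ℝ) : AddCircle (1:ℝ))) - f x|
      = ∫⁻ y in Set.Ioo (0:ℝ) 1, F x y := fun x =>
    (aux_layer (hf0 _) (hf1 _) (hf0 x) (hf1 x)).symm
  -- product measurability
  have hWmeas : MeasurableSet {p : AddCircle (1:ℝ) × ℝ |
      (p.2 < f (p.1 + ((h:ℝ) : AddCircle (1:ℝ)))) ≠ (p.2 < f p.1)} := by
    have hA : MeasurableSet {p : AddCircle (1:ℝ) × ℝ | p.2 < f (p.1 + ((h:ℝ) : AddCircle (1:ℝ)))} :=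
      (isOpen_lt continuous_snd (hfh.comp continuous_fst)).measurableSet
    have hB : MeasurableSet {p : AddCircle (1:ℝ) × ℝ | p.2 < f p.1} :=
      (isOpen_lt continuous_snd (hf.comp continuous_fst)).measurableSet
    have : {p : AddCircle (1:ℝ) × ℝ | (p.2 < f (p.1 + ((h:ℝ) : AddCircle (1:ℝ)))) ≠ (p.2 < f p.1)}
        = ({p : AddCircle (1:ℝ) × ℝ | p.2 < f (p.1 + ((h:ℝ) : AddCircle (1:ℝ)))} \
            {p : AddCircle (1:ℝ) × ℝ | p.2 < f p.1}) ∪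
          ({p : AddCircle (1:ℝ) × ℝ | p.2 < f p.1} \
            {p : AddCircle (1:ℝ) × ℝ | p.2 < f (p.1 + ((h:ℝ) : AddCircle (1:ℝ)))}) := by
      ext p; simp only [Set.mem_setOf_eq, Set.mem_union, Set.mem_diff, Set.mem_setOf_eq]; tauto
    rw [this]; exact (hA.diff hB).union (hB.diff hA)
  have hFmeas : Measurable (Function.uncurry F) := by
    have : Function.uncurry F = Set.indicator {p : AddCircle (1:ℝ) × ℝ |
        (p.2 < f (p.1 + ((h:ℝ) : AddCircle (1:ℝ)))) ≠ (p.2 < f p.1)} (fun _ => (1:ENNReal)) := by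
      funext p
      simp only [Function.uncurry, hF, Set.indicator_apply, Set.mem_setOf_eq]
    rw [this]
    exact measurable_const.indicator hWmeas
  -- step 2: swap
  have step2 : ∫⁻ x : AddCircle (1:ℝ), ∫⁻ y in Set.Ioo (0:ℝ) 1, F x y
      = ∫⁻ y in Set.Ioo (0:ℝ) 1, ∫⁻ x : AddCircle (1:ℝ), F x y :=
    lintegral_lintegral_swap hFmeas.aemeasurable
  -- slice D_y is measurable
  have hDmeas : ∀ y : ℝ, MeasurableSet {x : AddCircle (1:ℝ) |
      (y < f (x + ((h:ℝ) : AddCircle (1:ℝ)))) ≠ (y < f x)} := by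
    intro y
    have hA : MeasurableSet {x : AddCircle (1:ℝ) | y < f (x + ((h:ℝ) : AddCircle (1:ℝ)))} :=
      (isOpen_lt continuous_const hfh).measurableSet
    have hB : MeasurableSet {x : AddCircle (1:ℝ) | y < f x} :=
      (isOpen_lt continuous_const hf).measurableSet
    have : {x : AddCircle (1:ℝ) | (y < f (x + ((h:ℝ) : AddCircle (1:ℝ)))) ≠ (y < f x)}
        = ({x : AddCircle (1:ℝ) | y < f (x + ((h:ℝ) : AddCircle (1:ℝ)))} \ {x | y < f x}) ∪
          ({x : AddCircle (1:ℝ) | y < f x} \ {x | y < f (x + ((h:ℝ) : AddCircle (1:ℝ)))}) := by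
      ext p; simp only [Set.mem_setOf_eq, Set.mem_union, Set.mem_diff, Set.mem_setOf_eq]; tauto
    rw [this]; exact (hA.diff hB).union (hB.diff hA)
  have hG : ∀ y : ℝ, ∫⁻ x : AddCircle (1:ℝ), F x y
      = volume {x : AddCircle (1:ℝ) | (y < f (x + ((h:ℝ) : AddCircle (1:ℝ)))) ≠ (y < f x)} := by
    intro y
    have : (fun x => F x y) = Set.indicator {x : AddCircle (1:ℝ) |
        (y < f (x + ((h:ℝ) : AddCircle (1:ℝ)))) ≠ (y < f x)} (fun _ => (1:ENNReal)) := by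
      funext x
      simp only [hF, Set.indicator_apply, Set.mem_setOf_eq]
    rw [this, lintegral_indicator (hDmeas y)]
    simp
  -- step 3: pointwise bound in y
  have hc0 : c ≠ 0 := by
    rw [hc]
    simp only [ne_eq, ENNReal.ofReal_eq_zero, not_le]
    exact Real.log_pos (by exact_mod_cast lt_of_lt_of_le one_lt_two hN)
  have hctop : c ≠ ⊤ := ENNReal.ofReal_ne_top
  have step3 : ∀ y ∈ Set.Ioo (0:ℝ) 1, ∫⁻ x : AddCircle (1:ℝ), F x y ≤
      ENNReal.ofReal (2 * N * |h|) + c⁻¹ *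
        (if {x : AddCircle (1:ℝ) | f x = y}.Infinite then ⊤
         else ENNReal.ofReal (Real.log ({x : AddCircle (1:ℝ) | f x = y}.ncard))) := by
    intro y _
    rw [hG y]
    by_cases hcase : {x : AddCircle (1:ℝ) | f x = y}.Finite ∧
        {x : AddCircle (1:ℝ) | f x = y}.ncard ≤ N
    · obtain ⟨hfin, hcard⟩ := hcase
      refine le_trans ?_ le_self_add
      calc volume {x : AddCircle (1:ℝ) | (y < f (x + ((h:ℝ) : AddCircle (1:ℝ)))) ≠ (y < f x)}
          ≤ volume (⋃ z ∈ {x : AddCircle (1:ℝ) | f x = y}, Metric.closedBall z |h|) :=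
            measure_mono (aux_slice f hf y h)
        _ ≤ ∑ z ∈ hfin.toFinset, volume (Metric.closedBall z |h|) := by
            have heq : (⋃ z ∈ {x : AddCircle (1:ℝ) | f x = y}, Metric.closedBall z |h|)
                = ⋃ z ∈ hfin.toFinset, Metric.closedBall z |h| := by
              ext w; simp [Set.Finite.mem_toFinset]
            rw [heq]
            exact measure_biUnion_finset_le _ _
        _ ≤ ∑ z ∈ hfin.toFinset, ENNReal.ofReal (2 * |h|) := by
            refine Finset.sum_le_sum fun z _ => ?_
            rw [AddCircle.volume_closedBall]
            exact ENNReal.ofReal_le_ofReal (min_le_right _ _)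
        _ = hfin.toFinset.card * ENNReal.ofReal (2 * |h|) := by
            rw [Finset.sum_const, nsmul_eq_mul]
        _ ≤ N * ENNReal.ofReal (2 * |h|) := by
            gcongr
            rw [Set.ncard_eq_toFinset_card _ hfin] at hcard
            exact_mod_cast hcard
        _ = ENNReal.ofReal (2 * N * |h|) := by
            rw [← ENNReal.ofReal_natCast, ← ENNReal.ofReal_mul (by positivity)]
            ring_nf
    · have hPhi : c ≤ (if {x : AddCircle (1:ℝ) | f x = y}.Infinite then ⊤
          else ENNReal.ofReal (Real.log ({x : AddCircle (1:ℝ) | f x = y}.ncard))) := by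
        by_cases hinf : {x : AddCircle (1:ℝ) | f x = y}.Infinite
        · simp [hinf]
        · have hfin : {x : AddCircle (1:ℝ) | f x = y}.Finite := Set.not_infinite.1 hinf
          have hcard : N < {x : AddCircle (1:ℝ) | f x = y}.ncard := by
            by_contra hle
            exact hcase ⟨hfin, not_lt.1 hle⟩
          simp only [hinf, if_false, hc]
          apply ENNReal.ofReal_le_ofReal
          apply Real.log_le_log (by positivity)
          exact_mod_cast hcard.le
      calc volume {x : AddCircle (1:ℝ) | (y < f (x + ((h:ℝ) : AddCircle (1:ℝ)))) ≠ (y < f x)}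
          ≤ volume (Set.univ) := measure_mono (Set.subset_univ _)
        _ = 1 := by rw [AddCircle.measure_univ]; simp
        _ = c⁻¹ * c := (ENNReal.inv_mul_cancel hc0 hctop).symm
        _ ≤ c⁻¹ * (if {x : AddCircle (1:ℝ) | f x = y}.Infinite then ⊤
           else ENNReal.ofReal (Real.log ({x : AddCircle (1:ℝ) | f x = y}.ncard))) :=
            mul_le_mul_right hPhi _
        _ ≤ _ := le_add_self
  calc ∫⁻ x : AddCircle (1:ℝ), ENNReal.ofReal |f (x + ((h:ℝ) : AddCircle (1:ℝ))) - f x|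
      = ∫⁻ x : AddCircle (1:ℝ), ∫⁻ y in Set.Ioo (0:ℝ) 1, F x y := lintegral_congr step1
    _ = ∫⁻ y in Set.Ioo (0:ℝ) 1, ∫⁻ x : AddCircle (1:ℝ), F x y := step2
    _ ≤ ∫⁻ y in Set.Ioo (0:ℝ) 1, (ENNReal.ofReal (2 * N * |h|) + c⁻¹ *
        (if {x : AddCircle (1:ℝ) | f x = y}.Infinite then ⊤
         else ENNReal.ofReal (Real.log ({x : AddCircle (1:ℝ) | f x = y}.ncard)))) := by
        apply lintegral_mono_ae
        rw [ae_restrict_iff' measurableSet_Ioo]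
        exact ae_of_all _ step3
    _ = ENNReal.ofReal (2 * N * |h|) * volume (Set.Ioo (0:ℝ) 1) + c⁻¹ *
        ∫⁻ y in Set.Ioo (0:ℝ) 1,
          (if {x : AddCircle (1:ℝ) | f x = y}.Infinite then ⊤
           else ENNReal.ofReal (Real.log ({x : AddCircle (1:ℝ) | f x = y}.ncard))) := by
        rw [lintegral_add_left measurable_const, setLIntegral_const,
          lintegral_const_mul' _ _ (ENNReal.inv_ne_top.2 hc0)]
    _ = _ := by rw [Real.volume_Ioo]; norm_num

set_option maxHeartbeats 1600000 in
/-- If `f` is continuous on the circle with `0 ≤ f ≤ 1` and the Banach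
indicatrix `n(y) = #{x : f x = y}` satisfies `∫₀¹ log n(y) dy < ∞` (integrand `+∞` when
`n(y) = ∞`, and `0` when `n(y) ≤ 1`), then `ω(f,t)_1 = O(1/log(1/t))` as `t → 0⁺`. -/
theorem stmt_2 (f : AddCircle (1:ℝ) → ℝ) (hf : Continuous f)
    (hf0 : ∀ x, 0 ≤ f x) (hf1 : ∀ x, f x ≤ 1)
    (hint : ∫⁻ y in Set.Ioo (0:ℝ) 1,
      (if {x : AddCircle (1:ℝ) | f x = y}.Infinite then ⊤
       else ENNReal.ofReal (Real.log ({x : AddCircle (1:ℝ) | f x = y}.ncard))) < ⊤) :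
    ∃ C > 0, ∃ t₀ ∈ Set.Ioo (0:ℝ) 1, ∀ t ∈ Set.Ioc (0:ℝ) t₀,
      modulus f 1 t ≤ C / Real.log (1/t) := by
  set LE : ENNReal := ∫⁻ y in Set.Ioo (0:ℝ) 1,
      (if {x : AddCircle (1:ℝ) | f x = y}.Infinite then ⊤
       else ENNReal.ofReal (Real.log ({x : AddCircle (1:ℝ) | f x = y}.ncard))) with hLE
  have hLEtop : LE ≠ ⊤ := hint.ne
  set L : ℝ := LE.toReal with hL
  have hL0 : 0 ≤ L := ENNReal.toReal_nonneg
  refine ⟨2*L + 9, by linarith, 1/2, by norm_num, ?_⟩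
  intro t ht
  obtain ⟨ht0, ht12⟩ := ht
  have ht1 : t < 1 := lt_of_le_of_lt ht12 (by norm_num)
  set s : ℝ := Real.sqrt t with hs
  have hs0 : 0 < s := Real.sqrt_pos.2 ht0
  have hs1 : s < 1 := by
    rw [hs, show (1:ℝ) = Real.sqrt 1 by simp]
    exact Real.sqrt_lt_sqrt ht0.le ht1
  have hts : t = s^2 := (Real.sq_sqrt ht0.le).symm
  have hinv1 : 1 < 1/s := (one_lt_div hs0).2 hs1
  set N : ℕ := ⌈1/s⌉₊ with hNdef
  have hN2 : 2 ≤ N := by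
    have : 1 < N := Nat.lt_ceil.2 (by exact_mod_cast hinv1)
    omega
  have hNge : 1/s ≤ (N:ℝ) := Nat.le_ceil _
  have hNle : (N:ℝ) < 1/s + 1 := Nat.ceil_lt_add_one (by positivity)
  -- log facts
  have hlogt : Real.log (1/t) = 2 * Real.log (1/s) := by
    rw [one_div, one_div, Real.log_inv, Real.log_inv, hs, Real.log_sqrt ht0.le]
    ring
  have hlogs_pos : 0 < Real.log (1/s) := Real.log_pos hinv1
  have hlogt_pos : 0 < Real.log (1/t) := by rw [hlogt]; linarith
  have hlogN : Real.log (1/s) ≤ Real.log N :=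
    Real.log_le_log (by positivity) hNge
  have hlogN_pos : 0 < Real.log N := lt_of_lt_of_le hlogs_pos hlogN
  -- key: s * log(1/t) ≤ 2
  have hkey : s * Real.log (1/t) ≤ 2 := by
    have h1 : Real.log (1/s) ≤ 1/s - 1 := Real.log_le_sub_one_of_pos (by positivity)
    have h2 : Real.log (1/t) ≤ 2/s := by
      rw [hlogt]
      calc 2 * Real.log (1/s) ≤ 2 * (1/s - 1) := by linarith
        _ ≤ 2/s := by rw [mul_sub]; ring_nf; nlinarith [hs0]
    calc s * Real.log (1/t) ≤ s * (2/s) := by nlinarith [hs0]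
      _ = 2 := by field_simp
  -- bound the modulus
  have hne : Nonempty {h : ℝ // |h| ≤ t} := ⟨⟨0, by simp [ht0.le]⟩⟩
  rw [modulus]
  apply ciSup_le
  intro h
  have habs : |(h:ℝ)| ≤ t := h.2
  simp only [one_div_one, Real.rpow_one]
  have hint_eq : ∫ x : AddCircle (1:ℝ), |f (x + ((h.1 : ℝ) : AddCircle (1:ℝ))) - f x|
      = (∫⁻ x : AddCircle (1:ℝ), ENNReal.ofReal |f (x + ((h.1 : ℝ) : AddCircle (1:ℝ))) - f x|).toReal := by
    apply integral_eq_lintegral_of_nonneg_ae (ae_of_all _ fun x => abs_nonneg _)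
    exact ((hf.comp (continuous_id.add continuous_const)).sub hf).abs.aestronglyMeasurable
  rw [hint_eq]
  have hbound := aux_main f hf hf0 hf1 h.1 N hN2
  rw [← hLE] at hbound
  set R : ENNReal := ENNReal.ofReal (2 * N * |(h:ℝ)|) + (ENNReal.ofReal (Real.log N))⁻¹ * LE with hR
  have hRtop : R ≠ ⊤ := by
    rw [hR]
    apply ENNReal.add_ne_top.2
    constructor
    · exact ENNReal.ofReal_ne_top
    · exact ENNReal.mul_ne_top (ENNReal.inv_ne_top.2 (by
        simp only [ne_eq, ENNReal.ofReal_eq_zero, not_le]; exact hlogN_pos)) hLEtop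
  have hRle : (∫⁻ x : AddCircle (1:ℝ), ENNReal.ofReal |f (x + ((h.1 : ℝ) : AddCircle (1:ℝ))) - f x|).toReal
      ≤ R.toReal := ENNReal.toReal_mono hRtop hbound
  refine le_trans hRle ?_
  have hRval : R.toReal = 2 * N * |(h:ℝ)| + (Real.log N)⁻¹ * L := by
    rw [hR, ENNReal.toReal_add ENNReal.ofReal_ne_top (ENNReal.mul_ne_top
      (ENNReal.inv_ne_top.2 (by simp only [ne_eq, ENNReal.ofReal_eq_zero, not_le]; exact hlogN_pos)) hLEtop),
      ENNReal.toReal_ofReal (by positivity), ENNReal.toReal_mul, ENNReal.toReal_inv,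
      ENNReal.toReal_ofReal hlogN_pos.le, hL]
  rw [hRval]
  -- numeric bounds
  have hb1 : 2 * N * |(h:ℝ)| ≤ 4 * s := by
    have : 2 * (N:ℝ) * |(h:ℝ)| ≤ 2 * (1/s + 1) * t := by
      apply mul_le_mul (by nlinarith [hNle]) (habs) (abs_nonneg _) (by positivity)
    calc 2 * (N:ℝ) * |(h:ℝ)| ≤ 2 * (1/s + 1) * t := this
      _ = 2 * s + 2 * s^2 := by rw [hts]; field_simp
      _ ≤ 4 * s := by nlinarith [hs0, hs1]
  have hb1' : 4 * s ≤ 8 / Real.log (1/t) := by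
    rw [le_div_iff₀ hlogt_pos]
    nlinarith [hkey]
  have hb2 : (Real.log N)⁻¹ * L ≤ 2 * L / Real.log (1/t) := by
    have hinvle : (Real.log N)⁻¹ ≤ 2 / Real.log (1/t) := by
      have h1 : Real.log (1/t) / 2 ≤ Real.log N := by rw [hlogt]; linarith
      calc (Real.log N)⁻¹ ≤ (Real.log (1/t) / 2)⁻¹ := by
            apply inv_anti₀ (by positivity) h1
        _ = 2 / Real.log (1/t) := by rw [inv_div]
    calc (Real.log N)⁻¹ * L ≤ (2 / Real.log (1/t)) * L :=
        mul_le_mul_of_nonneg_right hinvle hL0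
      _ = 2 * L / Real.log (1/t) := by ring
  calc 2 * N * |(h:ℝ)| + (Real.log N)⁻¹ * L
      ≤ 8 / Real.log (1/t) + 2 * L / Real.log (1/t) := by
        apply add_le_add (le_trans hb1 hb1') hb2
    _ = (8 + 2 * L) / Real.log (1/t) := by ring
    _ ≤ (2*L + 9) / Real.log (1/t) := by
        rw [div_le_div_iff₀ hlogt_pos hlogt_pos]
        nlinarith [hlogt_pos, hL0]
end

section
/- Let p ≥ 1 and let f : 𝕋 → ℝ be continuous on the circle 𝕋 = ℝ/ℤ with 0 ≤ f ≤ 1, and let n(y) denote the number (possibly infinite) of solutions x ∈ 𝕋 of f(x) = y. If ∫_0^1 (n(y))^{1/p} dy < ∞, then ω(f,t)_p ≤ t^{1/p} · ∫_0^1 (n(y))^{1/p} dy for all t ∈ (0,1]; in particular ω(f,t)_p = O(t^{1/p}). -/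
/-!
The increment `|f (x + h) - f x|` is the length of the interval of levels `y` crossed by `f`
between `x` and `x + h`. Minkowski's integral inequality therefore bounds the `L^p` norm of
`f (· + h) - f` by `∫₀¹ |B_y|^{1/p} dy`, where `B_y` is the set of `x` for which `y` lies between
`f x` and `f (x + h)`. By the intermediate value theorem each such `x` lies within `|h|` of a
solution of `f = y`, so `|B_y| ≤ n(y) |h|`.
-/

open MeasureTheory Set Classical

open scoped ENNReal

noncomputable def banachIndicatrix {X : Type*} (f : X → ℝ) (y : ℝ) : ℝ≥0∞ :=
  ({x | f x = y}.encard : ℝ≥0∞)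

theorem Set.encard_rpow_eq_ite {X : Type*} (S : Set X) {r : ℝ} (hr : 0 < r) :
    (S.encard : ℝ≥0∞) ^ r = if S.Infinite then ⊤ else ENNReal.ofReal ((S.ncard : ℝ) ^ r) := by
  split_ifs with hS
  · rw [hS.encard_eq, ENat.toENNReal_top, ENNReal.top_rpow_of_pos hr]
  · rw [← (Set.not_infinite.1 hS).cast_ncard_eq, ENat.toENNReal_coe,
      ← ENNReal.ofReal_rpow_of_nonneg (Nat.cast_nonneg _) hr.le, ENNReal.ofReal_natCast]

theorem Real.setLIntegral_indicator_uIoo {s : Set ℝ} {a b : ℝ} (hab : uIoo a b ⊆ s) :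
    ∫⁻ y in s, (uIoo a b).indicator 1 y = ENNReal.ofReal |b - a| := by
  rw [lintegral_indicator_one (s := uIoo a b) measurableSet_Ioo,
    Measure.restrict_apply (t := uIoo a b) measurableSet_Ioo,
    inter_eq_self_of_subset_left hab, uIoo, Real.volume_Ioo, max_sub_min_eq_abs]

theorem ENNReal.rpow_one_div_le_of_le_rpow_mul {p q : ℝ} (hpq : p.HolderConjugate q)
    {L M : ℝ≥0∞} (hL : L ≠ ⊤) (h : L ≤ L ^ (1 / q) * M) : L ^ (1 / p) ≤ M := by
  rcases eq_or_ne L 0 with rfl | hL0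
  · rw [ENNReal.zero_rpow_of_pos (by simpa using hpq.pos)]
    exact zero_le
  have hq : 0 < 1 / q := by simpa using hpq.symm.pos
  have hsplit : L ^ (1 / q) * L ^ (1 / p) = L := by
    rw [← ENNReal.rpow_add _ _ hL0 hL, add_comm, hpq.one_div_add_one_div, div_one,
      ENNReal.rpow_one]
  rw [← ENNReal.mul_le_mul_iff_right (ENNReal.rpow_pos (pos_iff_ne_zero.2 hL0) hL).ne'
    (ENNReal.rpow_ne_top_of_nonneg hq.le hL), hsplit]
  exact h

/-- Minkowski's integral inequality. -/
theorem ENNReal.lintegral_Lp_lintegral_le {α β : Type*} [MeasurableSpace α]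
    [MeasurableSpace β] {μ : Measure α} {ν : Measure β} [SFinite μ] [SFinite ν] {p : ℝ}
    (hp : 1 ≤ p) {F : α × β → ℝ≥0∞} (hF : Measurable F)
    (hfin : ∫⁻ x, (∫⁻ y, F (x, y) ∂ν) ^ p ∂μ ≠ ⊤) :
    (∫⁻ x, (∫⁻ y, F (x, y) ∂ν) ^ p ∂μ) ^ (1 / p)
      ≤ ∫⁻ y, (∫⁻ x, F (x, y) ^ p ∂μ) ^ (1 / p) ∂ν := by
  rcases hp.eq_or_lt with rfl | hp1
  · simp only [div_one, ENNReal.rpow_one]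
    exact (lintegral_lintegral_swap (f := fun x y => F (x, y)) hF.aemeasurable).le
  set Φ : α → ℝ≥0∞ := fun x => ∫⁻ y, F (x, y) ∂ν
  have hΦ : Measurable Φ := hF.lintegral_prod_right'
  set q := p / (p - 1)
  have hpq : p.HolderConjugate q := Real.HolderConjugate.conjExponent hp1
  have hpow : ∀ x, Φ x ^ p = ∫⁻ y, Φ x ^ (p - 1) * F (x, y) ∂ν := fun x => by
    rw [lintegral_const_mul (f := fun y => F (x, y)) _ (hF.comp measurable_prodMk_left)]
    conv_lhs => rw [show p = (p - 1) + 1 by ring,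
      ENNReal.rpow_add_of_nonneg _ _ (by linarith) zero_le_one, ENNReal.rpow_one]
  have holder : ∀ y, ∫⁻ x, Φ x ^ (p - 1) * F (x, y) ∂μ
      ≤ (∫⁻ x, Φ x ^ p ∂μ) ^ (1 / q) * (∫⁻ x, F (x, y) ^ p ∂μ) ^ (1 / p) := fun y => by
    have := ENNReal.lintegral_mul_le_Lp_mul_Lq μ hpq.symm (hΦ.pow_const (p - 1)).aemeasurable
      (g := fun x => F (x, y)) (hF.comp measurable_prodMk_right).aemeasurable
    simp only [Pi.mul_apply, ← ENNReal.rpow_mul, hpq.sub_one_mul_conj] at this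
    exact this
  refine ENNReal.rpow_one_div_le_of_le_rpow_mul hpq hfin ?_
  calc ∫⁻ x, Φ x ^ p ∂μ = ∫⁻ x, ∫⁻ y, Φ x ^ (p - 1) * F (x, y) ∂ν ∂μ := lintegral_congr hpow
    _ = ∫⁻ y, ∫⁻ x, Φ x ^ (p - 1) * F (x, y) ∂μ ∂ν :=
        lintegral_lintegral_swap ((hΦ.comp measurable_fst).pow_const _ |>.mul hF).aemeasurable
    _ ≤ ∫⁻ y, (∫⁻ x, Φ x ^ p ∂μ) ^ (1 / q) * (∫⁻ x, F (x, y) ^ p ∂μ) ^ (1 / p) ∂ν :=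
        lintegral_mono holder
    _ = (∫⁻ x, Φ x ^ p ∂μ) ^ (1 / q) * ∫⁻ y, (∫⁻ x, F (x, y) ^ p ∂μ) ^ (1 / p) ∂ν :=
        lintegral_const_mul' _ _
          (ENNReal.rpow_ne_top_of_nonneg (by simpa using hpq.symm.nonneg) hfin)

namespace AddCircle

variable {T : ℝ}

theorem exists_eq_of_mem_uIcc {f : AddCircle T → ℝ} (hf : Continuous f) (x : AddCircle T)
    (h : ℝ) {y : ℝ} (hy : y ∈ uIcc (f x) (f (x + h))) :
    ∃ w, f w = y ∧ x ∈ Metric.closedBall (w - ((h / 2 : ℝ) : AddCircle T)) (|h| / 2) := by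
  have hg : Continuous fun s : ℝ => f (x + s) :=
    hf.comp (continuous_const.add (AddCircle.continuous_mk' T))
  obtain ⟨s, hs, rfl⟩ := intermediate_value_uIcc (a := 0) (b := h) hg.continuousOn
    (by simpa using hy)
  refine ⟨x + s, rfl, ?_⟩
  rw [Metric.mem_closedBall, dist_eq_norm, show x - (x + s - ((h / 2 : ℝ) : AddCircle T))
    = ((h / 2 - s : ℝ) : AddCircle T) by rw [AddCircle.coe_sub]; abel]
  refine QuotientAddGroup.norm_mk_le_norm.trans ?_
  rw [Real.norm_eq_abs, abs_le]
  rcases le_total 0 h with h0 | h0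
  · rw [uIcc_of_le h0] at hs
    rw [abs_of_nonneg h0]
    constructor <;> linarith [hs.1, hs.2]
  · rw [uIcc_of_ge h0] at hs
    rw [abs_of_nonpos h0]
    constructor <;> linarith [hs.1, hs.2]

variable [Fact (0 < T)]

theorem volume_setOf_mem_uIcc_le {f : AddCircle T → ℝ} (hf : Continuous f) {h : ℝ}
    (hh : h ≠ 0) (y : ℝ) :
    volume {x : AddCircle T | y ∈ uIcc (f x) (f (x + h))}
      ≤ banachIndicatrix f y * ENNReal.ofReal |h| := by
  set Z := {x : AddCircle T | f x = y}
  by_cases hZ : Z.Countable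
  · have hcover : {x : AddCircle T | y ∈ uIcc (f x) (f (x + h))}
        ⊆ ⋃ w ∈ Z, Metric.closedBall (w - ((h / 2 : ℝ) : AddCircle T)) (|h| / 2) := by
      intro x hx
      obtain ⟨w, hw, hxw⟩ := exists_eq_of_mem_uIcc hf x h hx
      exact mem_biUnion hw hxw
    calc volume {x : AddCircle T | y ∈ uIcc (f x) (f (x + h))}
        ≤ ∑' w : Z, volume (Metric.closedBall (w - ((h / 2 : ℝ) : AddCircle T)) (|h| / 2)) :=
          (measure_mono hcover).trans (measure_biUnion_le _ hZ _)
      _ ≤ ∑' _ : Z, ENNReal.ofReal |h| := by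
          gcongr
          rw [volume_closedBall]
          exact ENNReal.ofReal_le_ofReal ((min_le_right _ _).trans (by linarith))
      _ = banachIndicatrix f y * ENNReal.ofReal |h| := ENNReal.tsum_set_const _ _
  · rw [banachIndicatrix, (Set.encard_eq_top_iff.2 fun hfin => hZ hfin.countable),
      ENat.toENNReal_top, ENNReal.top_mul (by simpa using hh)]
    exact le_top

theorem lintegral_rpow_sub_le {p : ℝ} (hp : 1 ≤ p) {f : AddCircle T → ℝ} (hf : Continuous f)
    (hf0 : ∀ x, 0 ≤ f x) (hf1 : ∀ x, f x ≤ 1) (h : ℝ) :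
    (∫⁻ x, ENNReal.ofReal |f (x + h) - f x| ^ p) ^ (1 / p)
      ≤ ENNReal.ofReal |h| ^ (1 / p) * ∫⁻ y in Ioo 0 1, banachIndicatrix f y ^ (1 / p) := by
  have hp0 : 0 < p := zero_lt_one.trans_le hp
  rcases eq_or_ne h 0 with rfl | hh
  · simp [ENNReal.zero_rpow_of_pos hp0, ENNReal.zero_rpow_of_pos (inv_pos.2 hp0)]
  set U : Set (AddCircle T × ℝ) := {q | q.2 ∈ uIoo (f q.1) (f (q.1 + h))}
  have hU : MeasurableSet U :=
    ((isOpen_lt (by fun_prop) continuous_snd).inter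
      (isOpen_lt continuous_snd (by fun_prop))).measurableSet
  set F : AddCircle T × ℝ → ℝ≥0∞ := U.indicator 1
  have hlayer : ∀ x, ∫⁻ y in Ioo 0 1, F (x, y) = ENNReal.ofReal |f (x + h) - f x| := fun x =>
    Real.setLIntegral_indicator_uIoo (uIoo_subset_Ioo ⟨hf0 x, hf1 x⟩ ⟨hf0 (x + h), hf1 (x + h)⟩)
  have hslice : ∀ y, ∫⁻ x, F (x, y) ^ p
      = volume {x : AddCircle T | y ∈ uIoo (f x) (f (x + h))} := fun y => by
    have hpow : ∀ x, F (x, y) ^ p = ((Prod.mk · y) ⁻¹' U).indicator 1 x := fun x => by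
      by_cases hx : (x, y) ∈ U <;> simp [F, hx, ENNReal.zero_rpow_of_pos hp0]
    simp only [hpow]
    exact lintegral_indicator_one (measurable_prodMk_right hU)
  have hfin : ∫⁻ x, (∫⁻ y in Ioo 0 1, F (x, y)) ^ p ≠ ⊤ := by
    simp only [hlayer]
    refine ne_top_of_le_ne_top (measure_ne_top (volume : Measure (AddCircle T)) univ) ?_
    calc ∫⁻ x, ENNReal.ofReal |f (x + h) - f x| ^ p ≤ ∫⁻ _, 1 :=
          lintegral_mono fun x => ENNReal.rpow_le_one (ENNReal.ofReal_le_one.2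
            (abs_sub_le_of_nonneg_of_le (hf0 _) (hf1 _) (hf0 _) (hf1 _))) hp0.le
      _ = volume univ := lintegral_one
  calc (∫⁻ x, ENNReal.ofReal |f (x + h) - f x| ^ p) ^ (1 / p)
      = (∫⁻ x, (∫⁻ y in Ioo 0 1, F (x, y)) ^ p) ^ (1 / p) := by simp only [hlayer]
    _ ≤ ∫⁻ y in Ioo 0 1, (∫⁻ x, F (x, y) ^ p) ^ (1 / p) :=
        ENNReal.lintegral_Lp_lintegral_le hp (measurable_one.indicator hU) hfin
    _ ≤ ∫⁻ y in Ioo 0 1, (banachIndicatrix f y * ENNReal.ofReal |h|) ^ (1 / p) := by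
        refine lintegral_mono fun y => ENNReal.rpow_le_rpow ?_ (one_div_pos.2 hp0).le
        have hB : {x : AddCircle T | y ∈ uIoo (f x) (f (x + h))}
            ⊆ {x | y ∈ uIcc (f x) (f (x + h))} := fun x hx => uIoo_subset_uIcc_self hx
        rw [hslice]
        exact (measure_mono hB).trans (volume_setOf_mem_uIcc_le hf hh y)
    _ = ENNReal.ofReal |h| ^ (1 / p) * ∫⁻ y in Ioo 0 1, banachIndicatrix f y ^ (1 / p) := by
        simp_rw [ENNReal.mul_rpow_of_nonneg _ _ (one_div_pos.2 hp0).le]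
        rw [lintegral_mul_const' _ _ (ENNReal.rpow_ne_top_of_nonneg (by positivity)
          ENNReal.ofReal_ne_top), mul_comm]

end AddCircle

theorem modulus_le {p : ℝ} (hp : 1 ≤ p) {f : AddCircle (1 : ℝ) → ℝ} (hf : Continuous f)
    (hf0 : ∀ x, 0 ≤ f x) (hf1 : ∀ x, f x ≤ 1)
    (hI : ∫⁻ y in Ioo 0 1, banachIndicatrix f y ^ (1 / p) ≠ ⊤) {t : ℝ} (ht : 0 ≤ t) :
    modulus f p t ≤ t ^ (1 / p) * (∫⁻ y in Ioo 0 1, banachIndicatrix f y ^ (1 / p)).toReal := by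
  have hp0 : 0 < p := zero_lt_one.trans_le hp
  have : Nonempty {h : ℝ // |h| ≤ t} := ⟨⟨0, by simpa using ht⟩⟩
  refine ciSup_le fun ⟨h, hh⟩ => ?_
  have hcont : Continuous fun x : AddCircle (1 : ℝ) => |f (x + h) - f x| ^ p :=
    ((hf.comp (continuous_add_const _)).sub hf).abs.rpow_const fun _ => Or.inr hp0.le
  rw [integral_eq_lintegral_of_nonneg_ae (ae_of_all _ fun x => by positivity)
    hcont.aestronglyMeasurable]
  calc (∫⁻ x, ENNReal.ofReal (|f (x + h) - f x| ^ p)).toReal ^ (1 / p)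
      = ((∫⁻ x, ENNReal.ofReal |f (x + h) - f x| ^ p) ^ (1 / p)).toReal := by
        simp_rw [ENNReal.ofReal_rpow_of_nonneg (abs_nonneg _) hp0.le, ENNReal.toReal_rpow]
    _ ≤ (ENNReal.ofReal t ^ (1 / p) * ∫⁻ y in Ioo 0 1, banachIndicatrix f y ^ (1 / p)).toReal := by
        refine ENNReal.toReal_mono (ENNReal.mul_ne_top
          (ENNReal.rpow_ne_top_of_nonneg (by positivity) ENNReal.ofReal_ne_top) hI)
          ((AddCircle.lintegral_rpow_sub_le hp hf hf0 hf1 h).trans ?_)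
        gcongr
    _ = t ^ (1 / p) * (∫⁻ y in Ioo 0 1, banachIndicatrix f y ^ (1 / p)).toReal := by
        rw [ENNReal.toReal_mul, ENNReal.ofReal_rpow_of_nonneg ht (by positivity),
          ENNReal.toReal_ofReal (by positivity)]

/-- Let `p ≥ 1`, `f` continuous on the circle with `0 ≤ f ≤ 1`, and let
`n(y)` be the Banach indicatrix. If `∫₀¹ n(y)^{1/p} dy < ∞`, then
`ω(f,t)_p ≤ t^{1/p} · ∫₀¹ n(y)^{1/p} dy` for all `t ∈ (0,1]`. -/
theorem stmt_4 (p : ℝ) (hp : 1 ≤ p) (f : AddCircle (1:ℝ) → ℝ) (hf : Continuous f)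
    (hf0 : ∀ x, 0 ≤ f x) (hf1 : ∀ x, f x ≤ 1)
    (hint : ∫⁻ y in Set.Ioo (0:ℝ) 1,
      (if {x : AddCircle (1:ℝ) | f x = y}.Infinite then ⊤
       else ENNReal.ofReal ((({x : AddCircle (1:ℝ) | f x = y}.ncard : ℝ)) ^ (1/p))) < ⊤) :
    (∀ t ∈ Set.Ioc (0:ℝ) 1,
      modulus f p t ≤ t ^ (1/p) *
        (∫⁻ y in Set.Ioo (0:ℝ) 1,
          (if {x : AddCircle (1:ℝ) | f x = y}.Infinite then ⊤
           else ENNReal.ofReal ((({x : AddCircle (1:ℝ) | f x = y}.ncard : ℝ)) ^ (1/p)))).toReal) ∧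
    ∃ C > 0, ∀ t ∈ Set.Ioc (0:ℝ) 1, modulus f p t ≤ C * t ^ (1/p) := by
  have hindicatrix : (∫⁻ y in Set.Ioo (0:ℝ) 1,
      (if {x : AddCircle (1:ℝ) | f x = y}.Infinite then ⊤
       else ENNReal.ofReal ((({x : AddCircle (1:ℝ) | f x = y}.ncard : ℝ)) ^ (1/p))))
      = ∫⁻ y in Ioo 0 1, banachIndicatrix f y ^ (1 / p) :=
    lintegral_congr fun y => (Set.encard_rpow_eq_ite _ (by positivity)).symm
  rw [hindicatrix] at hint ⊢
  set I := ∫⁻ y in Ioo 0 1, banachIndicatrix f y ^ (1 / p)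
  have hmod (t : ℝ) (ht : t ∈ Ioc (0 : ℝ) 1) := modulus_le hp hf hf0 hf1 hint.ne ht.1.le
  refine ⟨hmod, I.toReal + 1, add_pos_of_nonneg_of_pos ENNReal.toReal_nonneg one_pos,
    fun t ht => (hmod t ht).trans ?_⟩
  rw [mul_comm]
  gcongr
  · exact Real.rpow_nonneg ht.1.le _
  · linarith
end

section
/- Let p ≥ 1 and let f : 𝕋 → ℝ be continuous on the circle 𝕋 = ℝ/ℤ with 0 ≤ f ≤ 1. For y ∈ [0,1) let E_y = {x ∈ 𝕋 : f(x) > y}. Then for every t ∈ (0,1], ω(f,t)_p ≤ ∫_0^1 (sup_{0 < h ≤ t} τ(h, E_y))^{1/p} dy. -/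
/-!
Write `Δ_h f(x) = f(x+h) - f(x)` and `E_y = {f > y}`. Since `0 ≤ f ≤ 1`, the layer-cake formula gives
`|Δ_h f(x)| = ∫₀¹ |χ_{E_y}(x+h) - χ_{E_y}(x)| dy`: the inner integrand is the indicator of the
`y` lying between `f x` and `f (x+h)`. Minkowski's integral inequality moves the `L^p` norm in `x`
inside the `y`-integral, and `‖χ_E(·+h) - χ_E‖_p = τ(h,E)^(1/p)`. Finally `τ(h,E) = τ(|h|,E)`, which
for `0 < |h| ≤ t` is bounded by the supremum over `0 < h ≤ t` (and `τ(0,E) = 0`).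
-/

open MeasureTheory Set

open ENNReal
open scoped symmDiff

/-- Minkowski's integral inequality. For `p > 1` it follows from Hölder by duality:
`∫ G^p = ∫_y ∫_x G^(p-1) F(x,y) ≤ (∫ G^p)^(1/q) ∫_y ‖F(·,y)‖_p` with `G = ∫_y F(·,y)`. -/
theorem lintegral_lintegral_rpow_le {α β : Type*} [MeasurableSpace α] [MeasurableSpace β]
    {μ : Measure α} {ν : Measure β} [SFinite μ] [SFinite ν] {p : ℝ} (hp : 1 ≤ p)
    {F : α → β → ℝ≥0∞} (hF : Measurable (Function.uncurry F))
    (hA : ∫⁻ x, (∫⁻ y, F x y ∂ν) ^ p ∂μ ≠ ∞) :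
    (∫⁻ x, (∫⁻ y, F x y ∂ν) ^ p ∂μ) ^ (1 / p) ≤ ∫⁻ y, (∫⁻ x, F x y ^ p ∂μ) ^ (1 / p) ∂ν := by
  rcases hp.eq_or_lt with rfl | hp1
  · simpa only [div_one, rpow_one] using (lintegral_lintegral_swap hF.aemeasurable).le
  set q := p / (p - 1)
  have hpq : q.HolderConjugate p := (Real.HolderConjugate.conjExponent hp1).symm
  set G := fun x => ∫⁻ y, F x y ∂ν
  set A := ∫⁻ x, G x ^ p ∂μ
  set I := ∫⁻ y, (∫⁻ x, F x y ^ p ∂μ) ^ (1 / p) ∂ν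
  have hG : Measurable fun x => G x ^ (p - 1) := hF.lintegral_prod_right'.pow_const _
  have hGq : ∫⁻ x, (G x ^ (p - 1)) ^ q ∂μ = A := by
    refine lintegral_congr fun x => ?_
    rw [← rpow_mul, mul_div_cancel₀ p (sub_pos.2 hp1).ne']
  have hAq : A ^ (1 / q) ≠ ∞ := rpow_ne_top_of_nonneg hpq.one_div_nonneg hA
  have key : A ≤ A ^ (1 / q) * I := calc
    A = ∫⁻ x, ∫⁻ y, G x ^ (p - 1) * F x y ∂ν ∂μ := by
      refine lintegral_congr fun x => ?_
      have hFx : Measurable (F x) := hF.comp measurable_prodMk_left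
      rw [lintegral_const_mul _ hFx]
      conv_lhs => rw [← sub_add_cancel p 1, rpow_add_of_nonneg _ _ (sub_nonneg.2 hp) zero_le_one,
        rpow_one]
    _ = ∫⁻ y, ∫⁻ x, G x ^ (p - 1) * F x y ∂μ ∂ν :=
      lintegral_lintegral_swap ((hG.comp measurable_fst).mul hF).aemeasurable
    _ ≤ ∫⁻ y, A ^ (1 / q) * (∫⁻ x, F x y ^ p ∂μ) ^ (1 / p) ∂ν := by
      refine lintegral_mono fun y => ?_
      rw [← hGq]
      exact lintegral_mul_le_Lp_mul_Lq μ hpq (g := fun x => F x y) hG.aemeasurable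
        (hF.comp measurable_prodMk_right).aemeasurable
    _ = A ^ (1 / q) * I := lintegral_const_mul' _ _ hAq
  rcases eq_or_ne A 0 with hA0 | hA0
  · rw [hA0, zero_rpow_of_pos (one_div_pos.2 (zero_lt_one.trans hp1))]
    exact zero_le
  have hsplit : A ^ (1 / q) * A ^ (1 / p) = A := by
    rw [← rpow_add _ _ hA0 hA, hpq.one_div_add_one_div, div_one, rpow_one]
  refine (ENNReal.mul_le_mul_iff_right ?_ hAq).1 (hsplit.trans_le key)
  exact (rpow_pos (pos_iff_ne_zero.2 hA0) hA).ne'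

local notation "𝕋" => AddCircle (1 : ℝ)

instance : IsProbabilityMeasure (volume : Measure 𝕋) :=
  ⟨by simp [AddCircle.measure_univ]⟩

section tau

variable (h : ℝ) (E : Set 𝕋)

theorem ofReal_tau : ENNReal.ofReal (tau h E) = volume (((· + (h : 𝕋)) ⁻¹' E) ∆ E) := by
  rw [tau, ofReal_toReal (measure_ne_top _ _)]
  congr 1
  ext x
  by_cases hxh : x + h ∈ E <;> by_cases hx : x ∈ E <;> simp [mem_symmDiff, hxh, hx]

theorem tau_nonneg : 0 ≤ tau h E := toReal_nonneg

theorem tau_le_one : tau h E ≤ 1 := measureReal_le_one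

theorem tau_zero : tau 0 E = 0 := by simp [tau]

theorem tau_neg : tau (-h) E = tau h E := by
  rw [← ofReal_eq_ofReal_iff (tau_nonneg _ _) (tau_nonneg _ _), ofReal_tau, ofReal_tau,
    ← measure_preimage_add_right volume (h : 𝕋), preimage_symmDiff, symmDiff_comm]
  simp [preimage_preimage]

theorem tau_abs : tau |h| E = tau h E := by
  rcases abs_choice h with habs | habs <;> rw [habs]
  exact tau_neg h E

theorem tau_le_iSup_tau {t : ℝ} (hh : |h| ≤ t) : tau h E ≤ ⨆ h' : Ioc (0 : ℝ) t, tau h' E := by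
  rcases eq_or_ne h 0 with rfl | h0
  · rw [tau_zero]
    exact Real.iSup_nonneg fun _ => tau_nonneg _ _
  · rw [← tau_abs]
    exact le_ciSup (f := fun h' : Ioc (0 : ℝ) t => tau h' E)
      ⟨1, by rintro _ ⟨_, rfl⟩; exact tau_le_one _ _⟩ ⟨|h|, abs_pos.2 h0, hh⟩

end tau

theorem setLIntegral_Ioo_indicator_Iio_symmDiff_Iio {a b : ℝ} (ha : a ∈ Icc 0 1)
    (hb : b ∈ Icc 0 1) :
    ∫⁻ y in Ioo 0 1, (Iio a ∆ Iio b).indicator 1 y = ENNReal.ofReal |a - b| := by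
  rw [lintegral_indicator_one (measurableSet_Iio.symmDiff measurableSet_Iio),
    Measure.restrict_apply (measurableSet_Iio.symmDiff measurableSet_Iio), abs_sub_comm]
  refine le_antisymm ?_ ?_
  · rw [← Real.volume_interval]
    refine measure_mono fun y hy => ?_
    simp only [mem_inter_iff, mem_symmDiff, mem_Iio, mem_uIcc] at hy ⊢
    grind
  · rw [← Real.volume_uIoo]
    refine measure_mono fun y hy => ?_
    simp only [mem_inter_iff, mem_symmDiff, mem_Iio, uIoo, mem_Ioo, mem_Icc] at hy ha hb ⊢
    grind

theorem indicator_one_rpow {α : Type*} (s : Set α) {p : ℝ} (hp : 0 < p) (a : α) :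
    s.indicator (1 : α → ℝ≥0∞) a ^ p = s.indicator 1 a := by
  by_cases ha : a ∈ s <;> simp [ha, hp]

theorem lintegral_abs_sub_rpow_le {p : ℝ} (hp : 1 ≤ p) {f : 𝕋 → ℝ} (hf : Measurable f)
    (hf0 : ∀ x, 0 ≤ f x) (hf1 : ∀ x, f x ≤ 1) (h : ℝ) :
    (∫⁻ x, ENNReal.ofReal |f (x + h) - f x| ^ p) ^ (1 / p)
      ≤ ∫⁻ y in Ioo 0 1, ENNReal.ofReal (tau h {x | f x > y}) ^ (1 / p) := by
  set F : 𝕋 → ℝ → ℝ≥0∞ := fun x y => (Iio (f (x + h)) ∆ Iio (f x)).indicator 1 y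
  have hF : Measurable (Function.uncurry F) := by
    change Measurable (({z : 𝕋 × ℝ | z.2 < f (z.1 + h)} ∆ {z | z.2 < f z.1}).indicator 1)
    refine measurable_one.indicator (MeasurableSet.symmDiff ?_ ?_)
    · exact measurableSet_lt measurable_snd ((hf.comp (measurable_add_const _)).comp measurable_fst)
    · exact measurableSet_lt measurable_snd (hf.comp measurable_fst)
  have hlayer : ∀ x, ∫⁻ y in Ioo 0 1, F x y = ENNReal.ofReal |f (x + h) - f x| := fun x =>
    setLIntegral_Ioo_indicator_Iio_symmDiff_Iio ⟨hf0 _, hf1 _⟩ ⟨hf0 _, hf1 _⟩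
  have hslice : ∀ y : ℝ, ∫⁻ x, F x y ^ p = ENNReal.ofReal (tau h {x | f x > y}) := by
    intro y
    have hE : MeasurableSet {x | f x > y} := measurableSet_lt measurable_const hf
    rw [ofReal_tau, ← lintegral_indicator_one ((hE.preimage (measurable_add_const _)).symmDiff hE)]
    exact lintegral_congr fun x => (indicator_one_rpow _ (by linarith) _).trans rfl
  have hfinite : ∫⁻ x, (∫⁻ y in Ioo 0 1, F x y) ^ p ≠ ∞ := by
    refine ne_top_of_le_ne_top one_ne_top ?_
    calc ∫⁻ x, (∫⁻ y in Ioo 0 1, F x y) ^ p ≤ ∫⁻ _ : 𝕋, 1 := lintegral_mono fun x => by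
          rw [hlayer]
          exact rpow_le_one (ofReal_le_one.2 (abs_sub_le_of_nonneg_of_le (hf0 _) (hf1 _) (hf0 _)
            (hf1 _))) (by linarith)
      _ = 1 := by simp
  simpa only [hlayer, hslice] using lintegral_lintegral_rpow_le hp hF hfinite

theorem integral_abs_rpow_eq_toReal_lintegral {α : Type*} [MeasurableSpace α] {μ : Measure α}
    {g : α → ℝ} (hg : AEStronglyMeasurable g μ) {p : ℝ} (hp : 0 ≤ p) :
    ∫ x, |g x| ^ p ∂μ = (∫⁻ x, ENNReal.ofReal |g x| ^ p ∂μ).toReal := by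
  rw [integral_eq_lintegral_of_nonneg_ae (f := fun x => |g x| ^ p)
    (ae_of_all _ fun x => by positivity) (hg.norm.aemeasurable.pow_const p).aestronglyMeasurable]
  exact congrArg _ (lintegral_congr fun x => (ofReal_rpow_of_nonneg (abs_nonneg _) hp).symm)

/-- For `p ≥ 1` and `f` continuous on the circle with `0 ≤ f ≤ 1`,
`ω(f,t)_p ≤ ∫₀¹ (sup_{0 < h ≤ t} τ(h, E_y))^{1/p} dy` for every `t ∈ (0,1]`, where
`E_y = {x : f x > y}`. -/
theorem stmt_6 (p : ℝ) (hp : 1 ≤ p) (f : AddCircle (1:ℝ) → ℝ) (hf : Continuous f)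
    (hf0 : ∀ x, 0 ≤ f x) (hf1 : ∀ x, f x ≤ 1) :
    ∀ t ∈ Set.Ioc (0:ℝ) 1,
      modulus f p t ≤ (∫⁻ y in Set.Ioo (0:ℝ) 1,
        ENNReal.ofReal ((⨆ h : Set.Ioc (0:ℝ) t,
          tau h {x : AddCircle (1:ℝ) | f x > y}) ^ (1/p))).toReal := by
  intro t _
  have hp' : 0 ≤ 1 / p := one_div_nonneg.2 (zero_le_one.trans hp)
  have hsup : ∀ y : ℝ, ⨆ h : Ioc (0 : ℝ) t, tau h {x | f x > y} ∈ Icc 0 1 := fun y =>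
    ⟨Real.iSup_nonneg fun _ => tau_nonneg _ _, Real.iSup_le (fun _ => tau_le_one _ _) zero_le_one⟩
  have hfinite : ∫⁻ y in Ioo (0 : ℝ) 1,
      ENNReal.ofReal ((⨆ h : Ioc (0 : ℝ) t, tau h {x | f x > y}) ^ (1 / p)) ≠ ∞ := by
    refine ne_top_of_le_ne_top (b := ∫⁻ _ in Ioo (0 : ℝ) 1, 1) ?_ (lintegral_mono fun y => ?_)
    · simp
    · exact ofReal_le_one.2 (Real.rpow_le_one (hsup y).1 (hsup y).2 hp')
  refine Real.iSup_le (fun h => ?_) toReal_nonneg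
  rw [integral_abs_rpow_eq_toReal_lintegral (g := fun x => f (x + (h.1 : 𝕋)) - f x)
    ((hf.comp (continuous_add_const _)).sub hf).aestronglyMeasurable (by linarith),
    toReal_rpow]
  refine toReal_mono hfinite ((lintegral_abs_sub_rpow_le hp hf.measurable hf0 hf1 h).trans
    (lintegral_mono fun y => ?_))
  rw [ofReal_rpow_of_nonneg (tau_nonneg _ _) hp']
  exact ofReal_le_ofReal (Real.rpow_le_rpow (tau_nonneg _ _) (tau_le_iSup_tau _ _ h.2) hp')
end

section
/- Let E ⊆ 𝕋 be an open subset of the circle written as an at most countable union of pairwise disjoint open arcs with lengths (l_k), with Besicovitch–Taylor index d_X = inf{β > 0 : Σ_k l_k^β < ∞} satisfying d_X < 1. Then for every p ≥ 1 and every α with 0 ≤ α < (1 − d_X)/p there exists C > 0 such that ω(χ_E, t)_p ≤ C·t^α for all t ∈ (0,1]. -/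
open MeasureTheory Set

lemma coe_eq_coe (x y : ℝ) : (x : AddCircle (1:ℝ)) = (y : AddCircle (1:ℝ)) ↔ ∃ n : ℤ, x = y + n := by
  rw [QuotientAddGroup.eq_iff_sub_mem]
  constructor
  · rintro h
    rw [AddSubgroup.mem_zmultiples_iff] at h
    obtain ⟨n, hn⟩ := h
    rw [zsmul_eq_mul, mul_one] at hn
    exact ⟨n, by linarith⟩
  · rintro ⟨n, hn⟩
    rw [AddSubgroup.mem_zmultiples_iff]
    exact ⟨n, by rw [zsmul_eq_mul, mul_one]; linarith⟩

lemma preim_arc {a l : ℝ} (hl : l ∈ Set.Ioc (0:ℝ) 1) :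
    ((↑) : ℝ → AddCircle (1:ℝ)) ⁻¹' arc a l ∩ Ioc a (a+1) = Ioo a (a + l) := by
  ext x
  simp only [arc, mem_inter_iff, mem_preimage, mem_image, mem_Ioo, mem_Ioc]
  constructor
  · rintro ⟨⟨r, hr, hrx⟩, hx⟩
    rw [coe_eq_coe] at hrx
    obtain ⟨n, hn⟩ := hrx
    have hn0 : n = 0 := by
      have h1 : (n:ℝ) < 1 := by nlinarith [hr.1, hr.2, hx.1, hx.2, hl.2]
      have h2 : (-1:ℝ) < n := by nlinarith [hr.1, hr.2, hx.1, hx.2, hl.2]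
      exact_mod_cast le_antisymm (by exact_mod_cast Int.lt_add_one_iff.mp (by exact_mod_cast h1))
        (by exact_mod_cast Int.add_one_le_iff.mpr (by exact_mod_cast h2 : (-1:ℤ) < n) |>.trans_eq (by ring))
    subst hn0
    simp only [Int.cast_zero, add_zero] at hn
    subst hn
    exact hr
  · intro hx
    exact ⟨⟨x, hx, rfl⟩, hx.1, hx.2.le.trans (by linarith [hl.2])⟩

lemma arc_isOpen (a l : ℝ) : IsOpen (arc a l) := by
  unfold arc
  exact QuotientAddGroup.isOpenMap_coe _ isOpen_Ioo

lemma arc_measurable (a l : ℝ) : MeasurableSet (arc a l) := (arc_isOpen a l).measurableSet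

lemma volume_arc {a l : ℝ} (hl : l ∈ Set.Ioc (0:ℝ) 1) :
    volume (arc a l) = ENNReal.ofReal l := by
  rw [AddCircle.add_projection_respects_measure (1:ℝ) a (arc_measurable a l)]
  rw [show (QuotientAddGroup.mk ⁻¹' arc a l : Set ℝ) = ((↑) : ℝ → AddCircle (1:ℝ)) ⁻¹' arc a l from rfl]
  rw [preim_arc hl, Real.volume_Ioo]
  congr 1; ring

lemma volume_arc_diff {a l : ℝ} (hl : l ∈ Set.Ioc (0:ℝ) 1) (b : ℝ) :
    volume (arc a l \ arc b l) ≤ ENNReal.ofReal (min l |a - b|) := by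
  rw [AddCircle.add_projection_respects_measure (1:ℝ) a ((arc_measurable a l).diff (arc_measurable b l))]
  have hsub : (QuotientAddGroup.mk ⁻¹' (arc a l \ arc b l) : Set ℝ) ∩ Ioc a (a+1)
      ⊆ Ioo a (a + l) \ Ioo b (b + l) := by
    intro x hx
    have h1 : x ∈ ((↑) : ℝ → AddCircle (1:ℝ)) ⁻¹' arc a l ∩ Ioc a (a+1) := ⟨hx.1.1, hx.2⟩
    rw [preim_arc hl] at h1
    refine ⟨h1, fun hxb => hx.1.2 ?_⟩
    exact ⟨x, hxb, rfl⟩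
  refine le_trans (measure_mono hsub) ?_
  rcases le_total l |a - b| with hm | hm
  · rw [min_eq_left hm]
    refine le_trans (measure_mono (diff_subset.trans Ioo_subset_Icc_self)) ?_
    rw [Real.volume_Icc]
    exact ENNReal.ofReal_le_ofReal (by linarith)
  · rw [min_eq_right hm]
    have hsub2 : Ioo a (a + l) \ Ioo b (b + l) ⊆ Ioc a b ∪ Ico (b + l) (a + l) := by
      intro x ⟨hx1, hx2⟩
      simp only [mem_Ioo, not_and, not_lt] at hx2
      rcases le_or_gt x b with h | h
      · exact Or.inl ⟨hx1.1, h⟩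
      · exact Or.inr ⟨hx2 h, hx1.2⟩
    refine le_trans (measure_mono hsub2) (le_trans (measure_union_le _ _) ?_)
    rw [Real.volume_Ioc, Real.volume_Ico]
    rcases le_total a b with h | h
    · have h2 : ENNReal.ofReal (a + l - (b + l)) = 0 := by
        simp only [ENNReal.ofReal_eq_zero]; linarith
      rw [h2, add_zero]
      exact ENNReal.ofReal_le_ofReal (by rw [abs_sub_comm]; linarith [le_abs_self (b - a)])
    · have h2 : ENNReal.ofReal (b - a) = 0 := by
        simp only [ENNReal.ofReal_eq_zero]; linarith
      rw [h2, zero_add]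
      exact ENNReal.ofReal_le_ofReal (by linarith [le_abs_self (a - b)])

lemma preim_add_arc (h a l : ℝ) :
    (fun x : AddCircle (1:ℝ) => x + ((h:ℝ) : AddCircle (1:ℝ))) ⁻¹' arc a l = arc (a - h) l := by
  ext x
  simp only [arc, mem_preimage, mem_image, mem_Ioo]
  constructor
  · rintro ⟨r, hr, hrx⟩
    refine ⟨r - h, ⟨by linarith [hr.1], by linarith [hr.2]⟩, ?_⟩
    push_cast
    rw [AddCircle.coe_sub]  -- maybe wrong name
    rw [hrx]; abel
  · rintro ⟨s, hs, hsx⟩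
    refine ⟨s + h, ⟨by linarith [hs.1], by linarith [hs.2]⟩, ?_⟩
    rw [AddCircle.coe_add, hsx]  -- maybe wrong

lemma mem_diff_ne {E : Set (AddCircle (1:ℝ))} {u v : AddCircle (1:ℝ)}
    (huv : E.indicator (fun _ => (1:ℝ)) u ≠ E.indicator (fun _ => (1:ℝ)) v) :
    (u ∈ E ∧ v ∉ E) ∨ (u ∉ E ∧ v ∈ E) := by
  by_cases hu : u ∈ E <;> by_cases hv : v ∈ E
  · exact absurd (by rw [indicator_of_mem hu, indicator_of_mem hv]) huv
  · exact Or.inl ⟨hu, hv⟩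
  · exact Or.inr ⟨hu, hv⟩
  · exact absurd (by rw [indicator_of_notMem hu, indicator_of_notMem hv]) huv

section main
variable {ι : Type} [Countable ι] (a l : ι → ℝ)

lemma tset_subset (h : ℝ) (E : Set (AddCircle (1:ℝ))) (hE : E = ⋃ k, arc (a k) (l k)) :
    {x : AddCircle (1:ℝ) |
      E.indicator (fun _ => (1:ℝ)) (x + ((h : ℝ) : AddCircle (1:ℝ)))
        ≠ E.indicator (fun _ => (1:ℝ)) x} ⊆
    (⋃ k, (arc (a k - h) (l k) \ arc (a k) (l k))) ∪
    (⋃ k, (arc (a k) (l k) \ arc (a k - h) (l k))) := by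
  intro x hx
  rcases mem_diff_ne hx with ⟨h1, h2⟩ | ⟨h1, h2⟩
  · -- x + h ∈ E, x ∉ E
    rw [hE, mem_iUnion] at h1
    obtain ⟨k, hk⟩ := h1
    refine Or.inl (mem_iUnion.mpr ⟨k, ?_, fun hxk => h2 ?_⟩)
    · rw [← preim_add_arc h (a k) (l k)]; exact hk
    · rw [hE]; exact mem_iUnion.mpr ⟨k, hxk⟩
  · rw [hE, mem_iUnion] at h2
    obtain ⟨k, hk⟩ := h2
    refine Or.inr (mem_iUnion.mpr ⟨k, hk, fun hxk => h1 ?_⟩)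
    rw [← preim_add_arc h (a k) (l k)] at hxk
    rw [hE]; exact mem_iUnion.mpr ⟨k, hxk⟩

lemma min_le_rpow_mul {L H β : ℝ} (hL : 0 ≤ L) (hH : 0 ≤ H) (hβ0 : 0 < β) (hβ1 : β ≤ 1) :
    min L H ≤ L ^ β * H ^ (1 - β) := by
  have hm : 0 ≤ min L H := le_min hL hH
  have hid : min L H = min L H ^ β * min L H ^ (1 - β) := by
    rw [← Real.rpow_add_of_nonneg hm hβ0.le (by linarith)]
    rw [show β + (1 - β) = 1 by ring, Real.rpow_one]
  rw [hid]
  exact mul_le_mul (Real.rpow_le_rpow hm (min_le_left _ _) hβ0.le)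
    (Real.rpow_le_rpow hm (min_le_right _ _) (by linarith))
    (Real.rpow_nonneg hm _) (Real.rpow_nonneg hL _)

lemma tau_le {β : ℝ} (hβ0 : 0 < β) (hβ1 : β ≤ 1)
    (hlen : ∀ k, l k ∈ Set.Ioc (0:ℝ) 1)
    (hsum : Summable fun k => l k ^ β)
    (E : Set (AddCircle (1:ℝ))) (hE : E = ⋃ k, arc (a k) (l k)) (h : ℝ) :
    tau h E ≤ 2 * ((∑' k, l k ^ β) * |h| ^ (1 - β)) := by
  have hS : 0 ≤ ∑' k, l k ^ β := tsum_nonneg fun k => Real.rpow_nonneg (hlen k).1.le _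
  have hbound : 0 ≤ 2 * ((∑' k, l k ^ β) * |h| ^ (1 - β)) := by positivity
  refine ENNReal.toReal_le_of_le_ofReal hbound ?_
  refine le_trans (measure_mono (tset_subset a l h E hE)) ?_
  refine le_trans (measure_union_le _ _) ?_
  have key : ∀ (b : ι → ℝ) (c : ι → ℝ), (∀ k, |b k - c k| = |h|) →
      volume (⋃ k, (arc (b k) (l k) \ arc (c k) (l k)))
        ≤ ENNReal.ofReal ((∑' k, l k ^ β) * |h| ^ (1 - β)) := by
    intro b c hbc
    refine le_trans (measure_iUnion_le _) ?_
    have hterm : ∀ k, volume (arc (b k) (l k) \ arc (c k) (l k))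
        ≤ ENNReal.ofReal (l k ^ β * |h| ^ (1 - β)) := by
      intro k
      refine le_trans (volume_arc_diff (hlen k) (c k)) (ENNReal.ofReal_le_ofReal ?_)
      rw [hbc k]
      exact min_le_rpow_mul (hlen k).1.le (abs_nonneg h) hβ0 hβ1
    refine le_trans (ENNReal.tsum_le_tsum hterm) ?_
    rw [← ENNReal.ofReal_tsum_of_nonneg (fun k => mul_nonneg
      (Real.rpow_nonneg (hlen k).1.le _) (Real.rpow_nonneg (abs_nonneg h) _))
      (hsum.mul_right _)]
    rw [tsum_mul_right]
  have h1 := key (fun k => a k - h) (fun k => a k) (fun k => by rw [abs_sub_comm]; simp)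
  have h2 := key (fun k => a k) (fun k => a k - h) (fun k => by simp)
  calc _ ≤ ENNReal.ofReal ((∑' k, l k ^ β) * |h| ^ (1 - β))
        + ENNReal.ofReal ((∑' k, l k ^ β) * |h| ^ (1 - β)) := add_le_add h1 h2
    _ = _ := by rw [← ENNReal.ofReal_add (by positivity) (by positivity)]; ring_nf

lemma summable_l (hlen : ∀ k, l k ∈ Set.Ioc (0:ℝ) 1)
    (hdisj : Pairwise (Function.onFun Disjoint (fun k => arc (a k) (l k)))) :
    Summable l := by
  have key : ∑' k, ENNReal.ofReal (l k) = volume (⋃ k, arc (a k) (l k)) := by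
    rw [measure_iUnion hdisj (fun k => arc_measurable _ _)]
    exact tsum_congr fun k => (volume_arc (hlen k)).symm
  have hfin : ∑' k, ENNReal.ofReal (l k) ≠ ⊤ := by
    rw [key]
    exact (lt_of_le_of_lt (measure_mono (subset_univ _)) (measure_lt_top _ _)).ne
  have := ENNReal.summable_toReal hfin
  refine this.congr fun k => ?_
  exact ENNReal.toReal_ofReal (hlen k).1.le

lemma integral_eq_tau {p : ℝ} (hp : p ≠ 0) (E : Set (AddCircle (1:ℝ)))
    (hmeas : MeasurableSet E) (h : ℝ) :
    (∫ x : AddCircle (1:ℝ), |E.indicator (fun _ => (1:ℝ)) (x + ((h : ℝ) : AddCircle (1:ℝ)))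
      - E.indicator (fun _ => (1:ℝ)) x| ^ p) = tau h E := by
  set T := {x : AddCircle (1:ℝ) |
    E.indicator (fun _ => (1:ℝ)) (x + ((h : ℝ) : AddCircle (1:ℝ)))
      ≠ E.indicator (fun _ => (1:ℝ)) x} with hT
  have hTeq : T = ((fun x : AddCircle (1:ℝ) => x + ((h:ℝ) : AddCircle (1:ℝ))) ⁻¹' E \ E)
      ∪ (E \ (fun x : AddCircle (1:ℝ) => x + ((h:ℝ) : AddCircle (1:ℝ))) ⁻¹' E) := by
    ext x
    simp only [hT, mem_setOf_eq, mem_union, mem_diff, mem_preimage]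
    constructor
    · intro hx
      rcases mem_diff_ne hx with ⟨h1, h2⟩ | ⟨h1, h2⟩
      · exact Or.inl ⟨h1, h2⟩
      · exact Or.inr ⟨h2, h1⟩
    · rintro (⟨h1, h2⟩ | ⟨h1, h2⟩) hc
      · rw [indicator_of_mem h1, indicator_of_notMem h2] at hc; exact one_ne_zero hc
      · rw [indicator_of_notMem h2, indicator_of_mem h1] at hc; exact one_ne_zero hc.symm
  have hTmeas : MeasurableSet T := by
    rw [hTeq]
    have hpre : MeasurableSet
        ((fun x : AddCircle (1:ℝ) => x + ((h:ℝ) : AddCircle (1:ℝ))) ⁻¹' E) :=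
      hmeas.preimage (measurable_add_const _)
    exact ((hpre.diff hmeas).union (hmeas.diff hpre))
  have hfun : (fun x : AddCircle (1:ℝ) =>
      |E.indicator (fun _ => (1:ℝ)) (x + ((h : ℝ) : AddCircle (1:ℝ)))
        - E.indicator (fun _ => (1:ℝ)) x| ^ p) = T.indicator (fun _ => (1:ℝ)) := by
    funext x
    by_cases hx : x ∈ T
    · rw [indicator_of_mem hx]
      rcases mem_diff_ne hx with ⟨h1, h2⟩ | ⟨h1, h2⟩
      · rw [indicator_of_mem h1, indicator_of_notMem h2]
        norm_num
      · rw [indicator_of_notMem h1, indicator_of_mem h2]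
        rw [show |(0:ℝ) - 1| = 1 by norm_num, Real.one_rpow]
    · rw [indicator_of_notMem hx]
      have : E.indicator (fun _ => (1:ℝ)) (x + ((h : ℝ) : AddCircle (1:ℝ)))
          = E.indicator (fun _ => (1:ℝ)) x := not_not.mp (fun hc => hx hc)
      rw [this, sub_self, abs_zero, Real.zero_rpow hp]
  rw [hfun, tau]
  exact integral_indicator_one hTmeas
end main

/-- If `E ⊆ 𝕋` is an at most countable union of pairwise disjoint open
arcs of lengths `l k`, with Besicovitch–Taylor index `d_X < 1`, then for every `p ≥ 1` and
`0 ≤ α < (1 - d_X)/p` there is `C > 0` with `ω(χ_E,t)_p ≤ C·t^α` for all `t ∈ (0,1]`. -/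
theorem stmt_12 {ι : Type} [Countable ι] (a l : ι → ℝ) (E : Set (AddCircle (1:ℝ)))
    (hE : E = ⋃ k, arc (a k) (l k))
    (hlen : ∀ k, l k ∈ Set.Ioc (0:ℝ) 1)
    (hdisj : Pairwise (Function.onFun Disjoint (fun k => arc (a k) (l k))))
    (hdX : sInf {β : ℝ | 0 < β ∧ Summable (fun k => l k ^ β)} < 1) :
    ∀ p : ℝ, 1 ≤ p → ∀ α : ℝ, 0 ≤ α →
      α < (1 - sInf {β : ℝ | 0 < β ∧ Summable (fun k => l k ^ β)}) / p →
      ∃ C > 0, ∀ t ∈ Set.Ioc (0:ℝ) 1,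
        modulus (E.indicator (fun _ => (1:ℝ))) p t ≤ C * t ^ α := by
  intro p hp α hα hα2
  have hp0 : (0:ℝ) < p := lt_of_lt_of_le one_pos hp
  set S : Set ℝ := {β : ℝ | 0 < β ∧ Summable (fun k => l k ^ β)} with hSdef
  have hSne : S.Nonempty := ⟨1, one_pos, by
    refine (summable_l a l hlen hdisj).congr fun k => ?_
    rw [Real.rpow_one]⟩
  have hSbdd : BddBelow S := ⟨0, fun β hβ => hβ.1.le⟩
  have hinf_lt : sInf S < 1 - α * p := by
    rw [lt_div_iff₀ hp0] at hα2; linarith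
  obtain ⟨β, hβS, hβlt⟩ := (csInf_lt_iff hSbdd hSne).mp hinf_lt
  obtain ⟨hβ0, hsum⟩ := hβS
  have hαp : 0 ≤ α * p := mul_nonneg hα hp0.le
  have hβ1 : β ≤ 1 := by linarith
  set S0 : ℝ := ∑' k, l k ^ β with hS0def
  have hS0 : 0 ≤ S0 := tsum_nonneg fun k => Real.rpow_nonneg (hlen k).1.le _
  refine ⟨max 1 ((2 * S0) ^ (1/p)), lt_of_lt_of_le one_pos (le_max_left _ _), ?_⟩
  intro t ht
  have htα : 0 < t ^ α := Real.rpow_pos_of_pos ht.1 _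
  have hCt : 0 ≤ max 1 ((2 * S0) ^ (1/p)) * t ^ α := by positivity
  refine Real.iSup_le (fun hh => ?_) hCt
  obtain ⟨h, hht⟩ := hh
  have hmeasE : MeasurableSet E := by
    rw [hE]; exact MeasurableSet.iUnion fun k => arc_measurable _ _
  rw [integral_eq_tau (by positivity : p ≠ 0) E hmeasE h]
  have htau0 : 0 ≤ tau h E := ENNReal.toReal_nonneg
  have htau : tau h E ≤ 2 * S0 * t ^ (1 - β) := by
    refine le_trans (tau_le a l hβ0 hβ1 hlen hsum E hE h) ?_
    rw [mul_assoc]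
    refine mul_le_mul_of_nonneg_left (mul_le_mul_of_nonneg_left ?_ hS0) (by norm_num)
    exact Real.rpow_le_rpow (abs_nonneg h) hht (by linarith)
  have hstep : tau h E ^ (1/p) ≤ (2 * S0 * t ^ (1 - β)) ^ (1/p) :=
    Real.rpow_le_rpow htau0 htau (by positivity)
  refine le_trans hstep ?_
  rw [Real.mul_rpow (by positivity) (Real.rpow_nonneg ht.1.le _),
    ← Real.rpow_mul ht.1.le]
  have hexp : α ≤ (1 - β) * (1/p) := by
    rw [mul_one_div, le_div_iff₀ hp0]; linarith
  have ht2 : t ^ ((1 - β) * (1/p)) ≤ t ^ α :=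
    Real.rpow_le_rpow_of_exponent_ge ht.1 ht.2 hexp
  exact mul_le_mul (le_max_right _ _) ht2 (Real.rpow_nonneg ht.1.le _)
    (le_trans zero_le_one (le_max_left _ _))
end
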